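/- arXiv:1902.03863 — 3 statements merged into one kernel-verified Lean document; each statement's English description precedes it below -/
import Mathlib

section
/- Let n ≥ 2 and 0 ≤ k < n be integers, let q* = 2n²/((n−k)(2n−1)), and let 1 < p ≤ q < ∞ with q > q*·p. Then there exists a constant c = c(p,q,k,n) > 0 such that for every δ ∈ (0,1) there exists a nonzero f ∈ L^p(ℝ^n) with ‖M^k_δ f‖_{L^q(ℝ^n)} ≥ c · δ^{n/q − (n−k)/p} · ‖f‖_{L^p(ℝ^n)}. -/
open MeasureTheory Metric Set

noncomputable section

/-- A `k`-face of the axis-parallel cube in `ℝⁿ` with center `x` and side length `2r`: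
the coordinates `j ∈ S` (with `#S = n - k`) are fixed at `x j ± r` (sign given by `ε j`),
the remaining coordinates range over `[x j - r, x j + r]`. -/
def kFace {n : ℕ} (x : Fin n → ℝ) (r : ℝ) (S : Finset (Fin n)) (ε : Fin n → Bool) :
    Set (Fin n → ℝ) :=
  {y | (∀ j ∈ S, y j = x j + (if ε j then r else -r)) ∧ ∀ j ∉ S, |y j - x j| ≤ r}

/-- The `k`-skeleton `S_k(x,r)` of the axis-parallel cube with center `x` and side
length `2r`: the union of all its `k`-faces. -/
def skeleton (n k : ℕ) (x : Fin n → ℝ) (r : ℝ) : Set (Fin n → ℝ) :=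
  ⋃ (S : Finset (Fin n)) (_ : S.card = n - k) (ε : Fin n → Bool), kFace x r S ε

/-- The `k`-skeleton maximal operator with width `δ`:
`M^k_δ f (x) = sup_{1 ≤ r ≤ 2} min_j ⨍_{S^j_{k,δ}(x,r)} |f|`, the minimum being taken
over all `k`-faces of the cube with center `x` and side length `2r`, each face thickened
by `δ` in the `ℓ∞` metric (which is the sup metric on `Fin n → ℝ`). -/
def skelMax (n k : ℕ) (δ : ℝ) (f : (Fin n → ℝ) → ℝ) (x : Fin n → ℝ) : ℝ :=
  ⨆ r ∈ Set.Icc (1 : ℝ) 2,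
    ⨅ (S : {S : Finset (Fin n) // S.card = n - k}) (ε : Fin n → Bool),
      ⨍ y in cthickening δ (kFace x r S.1 ε), |f y|

/-- The unit cube `Q₀ = [0,1)ⁿ`. -/
def Q0 (n : ℕ) : Set (Fin n → ℝ) := Set.univ.pi fun _ => Set.Ico (0 : ℝ) 1

/-- The cube `7Q₀`, concentric with `Q₀` and of side length `7`. -/
def sevenQ0 (n : ℕ) : Set (Fin n → ℝ) := Set.univ.pi fun _ => Set.Icc (-3 : ℝ) 4

/-- The translate by `v` of the coordinate `k`-plane spanned by the basis vectors
`e_j`, `j ∈ π`. -/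
def planeTranslate {n : ℕ} (π : Finset (Fin n)) (v : Fin n → ℝ) : Set (Fin n → ℝ) :=
  {y | ∀ j ∉ π, y j = v j}

/-- Center of the grid cube indexed by `z` in the grid of width `η` on `Q₀`. -/
def gridCenter {n : ℕ} (η : ℝ) {m : ℕ} (z : Fin n → Fin m) : Fin n → ℝ :=
  fun j => η * ((z j : ℝ) + 1 / 2)

/-- Index of the grid cube of width `η` containing `x` (for `x ∈ Q₀`). -/
def zOf {n : ℕ} (η : ℝ) {m : ℕ} (hm : 0 < m) (x : Fin n → ℝ) : Fin n → Fin m :=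
  fun j => ⟨(⌊x j / η⌋).toNat % m, Nat.mod_lt _ hm⟩

/-- The selected `k`-face `ℓᶻ` of the skeleton `S_k(x_z, ρ z)`, where `x_z` is the center
of the grid cube indexed by `z`. -/
def linFace {n : ℕ} (η : ℝ) {m : ℕ} (ρ : (Fin n → Fin m) → ℝ)
    (S : (Fin n → Fin m) → Finset (Fin n)) (ε : (Fin n → Fin m) → Fin n → Bool)
    (z : Fin n → Fin m) : Set (Fin n → ℝ) :=
  kFace (gridCenter η z) (ρ z) (S z) (ε z)

/-- The linearized `k`-skeleton maximal operator `M̃^k_{ρ,η}` of width `η`: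
for `x` in the grid cube indexed by `z`, it averages `|f|` over the closed
`η`-neighborhood (in the `ℓ∞` metric) of the selected face `ℓᶻ`. -/
def linMax {n : ℕ} (η : ℝ) {m : ℕ} (hm : 0 < m) (ρ : (Fin n → Fin m) → ℝ)
    (S : (Fin n → Fin m) → Finset (Fin n)) (ε : (Fin n → Fin m) → Fin n → Bool)
    (f : (Fin n → ℝ) → ℝ) (x : Fin n → ℝ) : ℝ :=
  ⨍ y in cthickening η (linFace η ρ S ε (zOf η hm x)), |f y|

/-- The overlap property for the selected faces: every affine translate `V` of a coordinate
`k`-plane `π` contains at most `C₀ · (#J)^{1 - (n-k)(2n-1)/(2n²)}` of the faces `ℓᶻ`, `z ∈ J`,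
whenever all the faces indexed by `J` are parallel to `π`. -/
def OverlapProp {n : ℕ} (k : ℕ) (η : ℝ) {m : ℕ} (ρ : (Fin n → Fin m) → ℝ)
    (S : (Fin n → Fin m) → Finset (Fin n)) (ε : (Fin n → Fin m) → Fin n → Bool)
    (C0 : ℝ) : Prop :=
  ∀ π : Finset (Fin n), π.card = k →
    ∀ J : Set (Fin n → Fin m),
      (∀ z ∈ J, ∃ v : Fin n → ℝ, linFace η ρ S ε z ⊆ planeTranslate π v) →
      ∀ v : Fin n → ℝ,
        ({z ∈ J | linFace η ρ S ε z ⊆ planeTranslate π v}).ncard ≤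
          C0 * (J.ncard : ℝ) ^ (1 - ((n : ℝ) - k) * (2 * (n : ℝ) - 1) / (2 * (n : ℝ) ^ 2))

/-- Abstract maximal averaging operator `T f (x) = sup_{r ∈ I} ⨍_{A_{x,r}} |f|`. -/
def absMax {n : ℕ} {I : Type*} (A : (Fin n → ℝ) → I → Set (Fin n → ℝ))
    (f : (Fin n → ℝ) → ℝ) (x : Fin n → ℝ) : ℝ :=
  ⨆ r : I, ⨍ y in A x r, |f y|

/-- `goodCount A E lam μ` says: for at least `m/2` of the indices `j`, the subset of
`A j ∩ E` where the multiplicity function `Υ = Σᵢ 1_{Aᵢ ∩ E}` is at most `μ` has measure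
at least `(lam/2)·|A j|`. -/
def goodCount {n m : ℕ} (A : Fin m → Set (Fin n → ℝ)) (E : Set (Fin n → ℝ))
    (lam : ℝ) (μ : ℕ) : Prop :=
  (m : ℝ) / 2 ≤
    ({j : Fin m | ENNReal.ofReal (lam / 2) * volume (A j) ≤
        volume {y ∈ A j ∩ E | ({i : Fin m | y ∈ A i ∩ E}).ncard ≤ μ}}).ncard



lemma kFace_eq_pi {n : ℕ} (x : Fin n → ℝ) (r : ℝ) (S : Finset (Fin n)) (ε : Fin n → Bool) :
    kFace x r S ε = Set.univ.pi (fun j => if j ∈ S then {x j + (if ε j then r else -r)}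
      else Icc (x j - r) (x j + r)) := by
  ext y
  simp only [kFace, mem_setOf_eq, mem_pi, mem_univ, true_implies]
  constructor
  · rintro ⟨h1, h2⟩ j
    by_cases hj : j ∈ S
    · simp [hj, h1 j hj]
    · have := abs_le.1 (h2 j hj)
      simp only [hj, if_false, mem_Icc]
      constructor <;> linarith [this.1, this.2]
  · intro h
    constructor
    · intro j hj
      have := h j
      simp only [hj, if_true, mem_singleton_iff] at this
      exact this
    · intro j hj
      have := h j
      simp only [hj, if_false, mem_Icc] at this
      rw [abs_le]
      constructor <;> linarith [this.1, this.2]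

lemma kFace_isCompact {n : ℕ} (x : Fin n → ℝ) (r : ℝ) (S : Finset (Fin n)) (ε : Fin n → Bool) :
    IsCompact (kFace x r S ε) := by
  rw [kFace_eq_pi]
  exact isCompact_univ_pi fun j => by
    by_cases hj : j ∈ S <;> simp [hj, isCompact_singleton, isCompact_Icc]

def facePt {n : ℕ} (x : Fin n → ℝ) (r : ℝ) (S : Finset (Fin n)) (ε : Fin n → Bool) :
    Fin n → ℝ :=
  fun j => if j ∈ S then x j + (if ε j then r else -r) else x j

lemma facePt_mem {n : ℕ} (x : Fin n → ℝ) {r : ℝ} (hr : 0 ≤ r) (S : Finset (Fin n))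
    (ε : Fin n → Bool) : facePt x r S ε ∈ kFace x r S ε := by
  constructor
  · intro j hj; simp [facePt, hj]
  · intro j hj; simp [facePt, hj, abs_nonneg, hr]

lemma kFace_nonempty {n : ℕ} (x : Fin n → ℝ) {r : ℝ} (hr : 0 ≤ r) (S : Finset (Fin n))
    (ε : Fin n → Bool) : (kFace x r S ε).Nonempty :=
  ⟨facePt x r S ε, facePt_mem x hr S ε⟩

/-- Points of the cthickening are close to a face point, coordinatewise. -/
lemma cthickening_kFace_subset {n : ℕ} (x : Fin n → ℝ) {r δ' : ℝ} (hr : 0 ≤ r) (hδ : 0 ≤ δ')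
    (S : Finset (Fin n)) (ε : Fin n → Bool) :
    cthickening δ' (kFace x r S ε) ⊆ Set.univ.pi (fun j =>
      if j ∈ S then Icc (x j + (if ε j then r else -r) - δ') (x j + (if ε j then r else -r) + δ')
      else Icc (x j - r - δ') (x j + r + δ')) := by
  intro y hy
  rw [mem_cthickening_iff] at hy
  obtain ⟨z, hz, hze⟩ := (kFace_isCompact x r S ε).exists_infEdist_eq_edist
    (kFace_nonempty x hr S ε) y
  rw [hze, edist_dist] at hy
  have hdist : dist y z ≤ δ' := (ENNReal.ofReal_le_ofReal_iff hδ).1 hy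
  intro j _
  have hj' : |y j - z j| ≤ δ' := by
    have := dist_le_pi_dist y z j
    rw [Real.dist_eq] at this
    linarith
  have hj'' := abs_le.1 hj'
  by_cases hj : j ∈ S
  · have := hz.1 j hj
    simp only [hj, if_true, mem_Icc]
    constructor <;> [linarith [hj''.1, this.ge]; linarith [hj''.2, this.le]]
  · have := abs_le.1 (hz.2 j hj)
    simp only [hj, if_false, mem_Icc]
    constructor <;> linarith [hj''.1, hj''.2, this.1, this.2]

end

section
open ENNReal
variable {n k : ℕ}


abbrev faceIdx (n k : ℕ) := {S : Finset (Fin n) // S.card = n - k} × (Fin n → Bool)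

lemma faceIdx_nonempty (n k : ℕ) : Nonempty (faceIdx n k) := by
  obtain ⟨S, -, hS⟩ := Finset.exists_subset_card_eq
    (show n - k ≤ (Finset.univ : Finset (Fin n)).card by simp [Nat.sub_le])
  exact ⟨⟨⟨S, hS⟩, fun _ => true⟩⟩

lemma skeleton_eq_iUnion (x : Fin n → ℝ) (r : ℝ) :
    skeleton n k x r = ⋃ i : faceIdx n k, kFace x r i.1.1 i.2 := by
  ext y
  simp only [skeleton, mem_iUnion]
  exact ⟨fun ⟨S, hS, ε, h⟩ => ⟨⟨⟨S, hS⟩, ε⟩, h⟩, fun ⟨⟨⟨S, hS⟩, ε⟩, h⟩ => ⟨S, hS, ε, h⟩⟩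

lemma cthickening_iUnion_subset {ι : Type*} [Finite ι] [Nonempty ι]
    (s : ι → Set (Fin n → ℝ)) (δ : ℝ) :
    cthickening δ (⋃ i, s i) ⊆ ⋃ i, cthickening δ (s i) := by
  intro y hy
  rw [mem_cthickening_iff, EMetric.infEdist_iUnion] at hy
  obtain ⟨i₀, hi₀⟩ := Finite.exists_min fun i => EMetric.infEdist y (s i)
  exact mem_iUnion.2 ⟨i₀, mem_cthickening_iff.2 (le_trans (le_iInf hi₀) hy)⟩

lemma prod_ite_card {M : Type*} [CommMonoid M] (S : Finset (Fin n)) (a b : M) :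
    (∏ j : Fin n, if j ∈ S then a else b) = a ^ S.card * b ^ Sᶜ.card := by
  rw [← Finset.prod_mul_prod_compl S]
  rw [Finset.prod_congr rfl (fun j hj => if_pos hj),
    Finset.prod_congr rfl (fun j hj => if_neg (Finset.mem_compl.1 hj)),
    Finset.prod_const, Finset.prod_const]

lemma volume_faceBox (x : Fin n → ℝ) (c : Fin n → ℝ) {r δ' : ℝ}
    (S : Finset (Fin n)) :
    volume (Set.univ.pi (fun j =>
      if j ∈ S then Icc (c j - δ') (c j + δ')
      else Icc (x j - r - δ') (x j + r + δ'))) =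
    ENNReal.ofReal (2 * δ') ^ S.card * ENNReal.ofReal (2 * r + 2 * δ') ^ Sᶜ.card := by
  rw [volume_pi_pi]
  have : ∀ j : Fin n, volume (if j ∈ S then Icc (c j - δ') (c j + δ')
      else Icc (x j - r - δ') (x j + r + δ')) =
      if j ∈ S then ENNReal.ofReal (2 * δ') else ENNReal.ofReal (2 * r + 2 * δ') := by
    intro j
    by_cases hj : j ∈ S <;> simp only [hj, if_true, if_false, Real.volume_Icc] <;> ring_nf
  simp_rw [this]
  exact prod_ite_card S _ _

/-- volume of a thickened face is at most the box volume. -/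
lemma volume_cthickening_kFace_le (x : Fin n → ℝ) {r δ' : ℝ} (hr : 0 ≤ r) (hδ : 0 ≤ δ')
    (S : Finset (Fin n)) (ε : Fin n → Bool) :
    volume (cthickening δ' (kFace x r S ε)) ≤
      ENNReal.ofReal (2 * δ') ^ S.card * ENNReal.ofReal (2 * r + 2 * δ') ^ Sᶜ.card := by
  calc volume (cthickening δ' (kFace x r S ε))
      ≤ volume (Set.univ.pi (fun j =>
        if j ∈ S then Icc (x j + (if ε j then r else -r) - δ') (x j + (if ε j then r else -r) + δ')
        else Icc (x j - r - δ') (x j + r + δ'))) :=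
        measure_mono (cthickening_kFace_subset x hr hδ S ε)
    _ = _ := volume_faceBox x _ S

lemma volume_cthickening_skeleton_le (hk : k ≤ n) {δ : ℝ} (hδ : 0 < δ) (hδ1 : δ < 1) :
    volume (cthickening (2 * δ) (skeleton n k 0 (3/2))) ≤
      ENNReal.ofReal ((4:ℝ)^n * 7^k * (4*δ)^(n-k)) := by
  have hne := faceIdx_nonempty n k
  calc volume (cthickening (2 * δ) (skeleton n k 0 (3/2)))
      ≤ volume (⋃ i : faceIdx n k, cthickening (2*δ) (kFace 0 (3/2) i.1.1 i.2)) := by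
        apply measure_mono
        rw [skeleton_eq_iUnion]
        exact cthickening_iUnion_subset _ _
    _ ≤ ∑ i : faceIdx n k, volume (cthickening (2*δ) (kFace 0 (3/2) i.1.1 i.2)) :=
        measure_iUnion_fintype_le _ _
    _ ≤ ∑ _i : faceIdx n k, ENNReal.ofReal (4*δ) ^ (n-k) * ENNReal.ofReal 7 ^ k := by
        apply Finset.sum_le_sum
        intro i _
        calc volume (cthickening (2*δ) (kFace 0 (3/2) i.1.1 i.2))
            ≤ ENNReal.ofReal (2 * (2*δ)) ^ i.1.1.card *
              ENNReal.ofReal (2 * (3/2) + 2 * (2*δ)) ^ (i.1.1)ᶜ.card :=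
              volume_cthickening_kFace_le 0 (by norm_num) (by linarith) _ _
          _ ≤ ENNReal.ofReal (4*δ) ^ (n-k) * ENNReal.ofReal 7 ^ k := by
              rw [i.1.2, Finset.card_compl, i.1.2, Fintype.card_fin,
                Nat.sub_sub_self hk]
              exact mul_le_mul'
                (pow_le_pow_left' (ENNReal.ofReal_le_ofReal (by linarith)) _)
                (pow_le_pow_left' (ENNReal.ofReal_le_ofReal (by linarith)) _)
    _ = (Fintype.card (faceIdx n k) : ℝ≥0∞) * (ENNReal.ofReal (4*δ) ^ (n-k) * ENNReal.ofReal 7 ^ k) := by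
        rw [Finset.sum_const, nsmul_eq_mul]; simp
    _ ≤ ((4:ℝ≥0∞)^n) * (ENNReal.ofReal (4*δ) ^ (n-k) * ENNReal.ofReal 7 ^ k) := by
        gcongr
        have : Fintype.card (faceIdx n k) ≤ 2^n * 2^n := by
          calc Fintype.card (faceIdx n k)
              = Fintype.card {S : Finset (Fin n) // S.card = n - k} * Fintype.card (Fin n → Bool) :=
                Fintype.card_prod _ _
            _ ≤ Fintype.card (Finset (Fin n)) * Fintype.card (Fin n → Bool) := by
                gcongr; exact Fintype.card_subtype_le _
            _ = 2^n * 2^n := by simp [Fintype.card_finset]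
        calc (Fintype.card (faceIdx n k) : ℝ≥0∞) ≤ ((2^n * 2^n : ℕ) : ℝ≥0∞) := by
              exact_mod_cast this
          _ = (4:ℝ≥0∞)^n := by push_cast; rw [← mul_pow]; norm_num
    _ = ENNReal.ofReal ((4:ℝ)^n * 7^k * (4*δ)^(n-k)) := by
        have h7 : (ENNReal.ofReal (7:ℝ)) ^ k = ENNReal.ofReal ((7:ℝ)^k) :=
          (ENNReal.ofReal_pow (by norm_num) k).symm
        have h4d : (ENNReal.ofReal (4*δ)) ^ (n-k) = ENNReal.ofReal ((4*δ)^(n-k)) :=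
          (ENNReal.ofReal_pow (by positivity) _).symm
        have h4n : (4:ℝ≥0∞)^n = ENNReal.ofReal ((4:ℝ)^n) := by
          rw [ENNReal.ofReal_pow (by norm_num : (0:ℝ) ≤ 4) n, ENNReal.ofReal_ofNat]
        rw [h4n, h7, h4d, ← ENNReal.ofReal_mul (by positivity),
          ← ENNReal.ofReal_mul (by positivity)]
        congr 1
        ring

end

section
variable {n k : ℕ}


lemma avg_abs_nonneg (f : (Fin n → ℝ) → ℝ) (T : Set (Fin n → ℝ)) :
    0 ≤ ⨍ y in T, |f y| := by
  rw [setAverage_eq, smul_eq_mul]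
  exact mul_nonneg (by positivity) (integral_nonneg fun y => abs_nonneg _)

lemma avg_abs_indicator_le_one (U T : Set (Fin n → ℝ)) (hU : MeasurableSet U) :
    ⨍ y in T, |U.indicator (fun _ => (1:ℝ)) y| ≤ 1 := by
  have habs : ∀ y, |U.indicator (fun _ => (1:ℝ)) y| = U.indicator (fun _ => (1:ℝ)) y :=
    fun y => abs_of_nonneg (Set.indicator_nonneg (fun _ _ => zero_le_one) y)
  simp_rw [habs]
  rw [setAverage_eq, integral_indicator_const (1:ℝ) hU, measureReal_restrict_apply hU,
    smul_eq_mul, smul_eq_mul, mul_one, measureReal_def, measureReal_def]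
  by_cases hT : volume T = ⊤
  · simp [hT]
  · rcases eq_or_ne (volume T) 0 with h0 | h0
    · have : volume (U ∩ T) = 0 := measure_mono_null inter_subset_right h0
      simp [h0, this]
    · have hle : (volume (U ∩ T)).toReal ≤ (volume T).toReal :=
        ENNReal.toReal_mono hT (measure_mono inter_subset_right)
      have hpos : 0 < (volume T).toReal := ENNReal.toReal_pos h0 hT
      calc (volume T).toReal⁻¹ * (volume (U ∩ T)).toReal
          ≤ (volume T).toReal⁻¹ * (volume T).toReal :=
            mul_le_mul_of_nonneg_left hle (by positivity)
        _ = 1 := inv_mul_cancel₀ hpos.ne'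

lemma avg_abs_indicator_eq_one {U T : Set (Fin n → ℝ)} (hU : MeasurableSet U) (hTU : T ⊆ U)
    (hT0 : volume T ≠ 0) (hTtop : volume T ≠ ⊤) :
    ⨍ y in T, |U.indicator (fun _ => (1:ℝ)) y| = 1 := by
  have habs : ∀ y, |U.indicator (fun _ => (1:ℝ)) y| = U.indicator (fun _ => (1:ℝ)) y :=
    fun y => abs_of_nonneg (Set.indicator_nonneg (fun _ _ => zero_le_one) y)
  simp_rw [habs]
  rw [setAverage_eq, integral_indicator_const (1:ℝ) hU, measureReal_restrict_apply hU,
    inter_eq_self_of_subset_right hTU, smul_eq_mul, smul_eq_mul, mul_one, measureReal_def]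
  exact inv_mul_cancel₀ (ENNReal.toReal_ne_zero.2 ⟨hT0, hTtop⟩)



lemma cthickening_kFace_shift {x : Fin n → ℝ} {δ r : ℝ} (hδ : 0 ≤ δ) (hr : 0 ≤ r)
    (hx : ∀ j, |x j| ≤ δ) (S : Finset (Fin n)) (ε : Fin n → Bool) :
    cthickening δ (kFace x r S ε) ⊆ cthickening (2*δ) (kFace 0 r S ε) := by
  intro y hy
  rw [mem_cthickening_iff] at hy
  obtain ⟨z, hz, hze⟩ := (kFace_isCompact x r S ε).exists_infEdist_eq_edist
    (kFace_nonempty x hr S ε) y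
  rw [hze, edist_dist] at hy
  have hdist : dist y z ≤ δ := (ENNReal.ofReal_le_ofReal_iff hδ).1 hy
  set w : Fin n → ℝ := fun j => z j - x j with hw
  have hwmem : w ∈ kFace 0 r S ε := by
    constructor
    · intro j hj
      have := hz.1 j hj
      simp only [hw, Pi.zero_apply, zero_add]
      rw [this]; ring
    · intro j hj
      have := hz.2 j hj
      simp only [hw, Pi.zero_apply, sub_zero]
      exact this
  have hzw : dist z w ≤ δ := by
    rw [dist_pi_le_iff hδ]
    intro j
    rw [Real.dist_eq]
    simp only [hw]
    rw [show z j - (z j - x j) = x j by ring]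
    exact hx j
  rw [mem_cthickening_iff]
  calc EMetric.infEdist y (kFace 0 r S ε) ≤ edist y w :=
        EMetric.infEdist_le_edist_of_mem hwmem
    _ ≤ ENNReal.ofReal (2*δ) := by
        rw [edist_dist]
        exact ENNReal.ofReal_le_ofReal
          (le_trans (dist_triangle y z w) (by linarith))

lemma volume_cthickening_kFace_pos (x : Fin n → ℝ) {δ r : ℝ} (hδ : 0 < δ) (hr : 0 ≤ r)
    (S : Finset (Fin n)) (ε : Fin n → Bool) :
    0 < volume (cthickening δ (kFace x r S ε)) := by
  refine lt_of_lt_of_le (measure_ball_pos volume (facePt x r S ε) hδ) (measure_mono ?_)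
  exact (ball_subset_closedBall).trans
    (closedBall_subset_cthickening (facePt_mem x hr S ε) δ)

lemma one_le_skelMax (hk : k ≤ n) {δ : ℝ} (hδ : 0 < δ) (hδ1 : δ < 1)
    {x : Fin n → ℝ} (hx : ∀ j, |x j| ≤ δ) :
    1 ≤ skelMax n k δ
      ((cthickening (2*δ) (skeleton n k 0 (3/2))).indicator fun _ => (1:ℝ)) x := by
  set U : Set (Fin n → ℝ) := cthickening (2*δ) (skeleton n k 0 (3/2)) with hUdef
  have hU : MeasurableSet U := isClosed_cthickening.measurableSet
  have hUtop : volume U ≠ ⊤ :=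
    (lt_of_le_of_lt (volume_cthickening_skeleton_le hk hδ hδ1) ENNReal.ofReal_lt_top).ne
  set f : (Fin n → ℝ) → ℝ := U.indicator fun _ => (1:ℝ) with hf
  have hne := faceIdx_nonempty n k
  haveI : Nonempty {S : Finset (Fin n) // S.card = n - k} := ⟨hne.some.1⟩
  -- inner infimum bounds
  have hbddB : ∀ r : ℝ, BddBelow (Set.range fun S : {S : Finset (Fin n) // S.card = n - k} =>
      ⨅ ε : Fin n → Bool, ⨍ y in cthickening δ (kFace x r S.1 ε), |f y|) := by
    intro r
    refine ⟨0, ?_⟩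
    rintro _ ⟨S, rfl⟩
    exact le_ciInf fun ε => avg_abs_nonneg _ _
  have hbddB' : ∀ (r : ℝ) (S : {S : Finset (Fin n) // S.card = n - k}),
      BddBelow (Set.range fun ε : Fin n → Bool =>
        ⨍ y in cthickening δ (kFace x r S.1 ε), |f y|) := by
    intro r S
    exact ⟨0, by rintro _ ⟨ε, rfl⟩; exact avg_abs_nonneg _ _⟩
  have hGle : ∀ r : ℝ,
      (⨅ (S : {S : Finset (Fin n) // S.card = n - k}) (ε : Fin n → Bool),
        ⨍ y in cthickening δ (kFace x r S.1 ε), |f y|) ≤ 1 := by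
    intro r
    obtain ⟨i₀⟩ := hne
    refine ciInf_le_of_le (hbddB r) i₀.1 ?_
    exact ciInf_le_of_le (hbddB' r i₀.1) i₀.2 (avg_abs_indicator_le_one U _ hU)
  have hbdd : BddAbove (Set.range fun r : ℝ => ⨆ (_ : r ∈ Set.Icc (1:ℝ) 2),
      ⨅ (S : {S : Finset (Fin n) // S.card = n - k}) (ε : Fin n → Bool),
        ⨍ y in cthickening δ (kFace x r S.1 ε), |f y|) := by
    refine ⟨1, ?_⟩
    rintro _ ⟨r, rfl⟩
    by_cases h : r ∈ Set.Icc (1:ℝ) 2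
    · exact (ciSup_pos h).trans_le (hGle r)
    · haveI : IsEmpty (r ∈ Set.Icc (1:ℝ) 2) := ⟨h⟩
      exact (Real.iSup_of_isEmpty _).trans_le zero_le_one
  have h32 : (3:ℝ)/2 ∈ Set.Icc (1:ℝ) 2 := by norm_num
  have hval : (1:ℝ) ≤ ⨅ (S : {S : Finset (Fin n) // S.card = n - k}) (ε : Fin n → Bool),
      ⨍ y in cthickening δ (kFace x (3/2) S.1 ε), |f y| := by
    refine le_ciInf fun S => le_ciInf fun ε => ?_
    have hsub : cthickening δ (kFace x (3/2) S.1 ε) ⊆ U := by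
      refine (cthickening_kFace_shift hδ.le (by norm_num) hx S.1 ε).trans ?_
      refine cthickening_subset_of_subset _ ?_
      intro y hy
      exact Set.mem_iUnion.2 ⟨S.1, Set.mem_iUnion.2 ⟨S.2, Set.mem_iUnion.2 ⟨ε, hy⟩⟩⟩
    have hpos : volume (cthickening δ (kFace x (3/2) S.1 ε)) ≠ 0 :=
      (volume_cthickening_kFace_pos x hδ (by norm_num) S.1 ε).ne'
    have htop : volume (cthickening δ (kFace x (3/2) S.1 ε)) ≠ ⊤ :=
      (lt_of_le_of_lt (measure_mono hsub) hUtop.lt_top).ne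
    rw [avg_abs_indicator_eq_one hU hsub hpos htop]
  unfold skelMax
  refine le_ciSup_of_le hbdd (3/2 : ℝ) ?_
  show (1:ℝ) ≤ ⨆ (_ : (3:ℝ)/2 ∈ Set.Icc (1:ℝ) 2),
    ⨅ (S : {S : Finset (Fin n) // S.card = n - k}) (ε : Fin n → Bool),
      ⨍ y in cthickening δ (kFace x (3/2) S.1 ε), |f y|
  rw [ciSup_pos h32]
  exact hval

end


/-- lower bound, off-diagonal region `q > q*·p`.
For `n ≥ 2`, `0 ≤ k < n`, `q* = 2n²/((n-k)(2n-1))` and `1 < p ≤ q < ∞` with `q > q*·p`,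
there is `c = c(p,q,k,n) > 0` such that for every `δ ∈ (0,1)` there is a nonzero
`f ∈ L^p(ℝⁿ)` with `‖M^k_δ f‖_{L^q} ≥ c δ^{n/q - (n-k)/p} ‖f‖_{L^p}`. -/
theorem skelMax_lower_bound_offdiagonal (n k : ℕ) (hn : 2 ≤ n) (hk : k < n)
    (p q : ℝ) (hp : 1 < p) (hpq : p ≤ q)
    (hq : 2 * (n : ℝ) ^ 2 / (((n : ℝ) - k) * (2 * (n : ℝ) - 1)) * p < q) :
    ∃ c > 0, ∀ δ ∈ Set.Ioo (0 : ℝ) 1, ∃ f : (Fin n → ℝ) → ℝ,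
      MemLp f (ENNReal.ofReal p) volume ∧
      eLpNorm f (ENNReal.ofReal p) volume ≠ 0 ∧
      ENNReal.ofReal (c * δ ^ ((n : ℝ) / q - ((n : ℝ) - k) / p)) *
          eLpNorm f (ENNReal.ofReal p) volume ≤
        eLpNorm (skelMax n k δ f) (ENNReal.ofReal q) volume := by
  have hkn : k ≤ n := hk.le
  have ppos : (0:ℝ) < p := lt_trans one_pos hp
  have qpos : (0:ℝ) < q := lt_of_lt_of_le ppos hpq
  set A : ℝ := 4^n * 7^k * 4^(n-k) with hAdef
  have hA : (0:ℝ) < A := by positivity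
  refine ⟨(2:ℝ)^((n:ℝ)/q) / A^((1:ℝ)/p), by positivity, ?_⟩
  rintro δ ⟨hδ0, hδ1⟩
  set U : Set (Fin n → ℝ) := cthickening (2*δ) (skeleton n k 0 (3/2)) with hUdef
  have hU : MeasurableSet U := isClosed_cthickening.measurableSet
  have hUle : volume U ≤ ENNReal.ofReal (A * δ^(n-k)) := by
    refine (volume_cthickening_skeleton_le hkn hδ0 hδ1).trans (le_of_eq ?_)
    congr 1
    rw [mul_pow]; ring
  have hUtop : volume U ≠ ⊤ := (lt_of_le_of_lt hUle ENNReal.ofReal_lt_top).ne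
  have hU0 : volume U ≠ 0 := by
    obtain ⟨i₀⟩ := faceIdx_nonempty n k
    have hpt : facePt 0 (3/2) i₀.1.1 i₀.2 ∈ skeleton n k 0 (3/2) :=
      Set.mem_iUnion.2 ⟨i₀.1.1, Set.mem_iUnion.2 ⟨i₀.1.2, Set.mem_iUnion.2
        ⟨i₀.2, facePt_mem 0 (by norm_num) _ _⟩⟩⟩
    refine (lt_of_lt_of_le (measure_ball_pos volume (facePt 0 (3/2) i₀.1.1 i₀.2)
      (by linarith : (0:ℝ) < 2*δ)) ?_).ne'
    exact measure_mono ((ball_subset_closedBall).trans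
      (closedBall_subset_cthickening hpt (2*δ)))
  set f : (Fin n → ℝ) → ℝ := U.indicator fun _ => (1:ℝ) with hf
  have hp0 : ENNReal.ofReal p ≠ 0 := (ENNReal.ofReal_pos.2 ppos).ne'
  have hq0 : ENNReal.ofReal q ≠ 0 := (ENNReal.ofReal_pos.2 qpos).ne'
  have hptr : (ENNReal.ofReal p).toReal = p := ENNReal.toReal_ofReal ppos.le
  have hqtr : (ENNReal.ofReal q).toReal = q := ENNReal.toReal_ofReal qpos.le
  have hfnorm : eLpNorm f (ENNReal.ofReal p) volume = volume U ^ (1/p) := by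
    rw [hf, eLpNorm_indicator_const hU hp0 ENNReal.ofReal_ne_top, hptr]
    simp
  refine ⟨f, ?_, ?_, ?_⟩
  · refine ⟨(measurable_const.indicator hU).aestronglyMeasurable, ?_⟩
    rw [hfnorm]
    exact ENNReal.rpow_lt_top_of_nonneg (by positivity) hUtop
  · rw [hfnorm]
    simp only [ne_eq, ENNReal.rpow_eq_zero_iff, not_or]
    exact ⟨fun h => hU0 h.1, fun h => hUtop h.1⟩
  · -- main inequality
    set E : Set (Fin n → ℝ) := Set.univ.pi fun _ => Icc (-δ) δ with hE
    have hEmeas : MeasurableSet E := MeasurableSet.univ_pi fun _ => measurableSet_Icc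
    have hEvol : volume E = ENNReal.ofReal (2*δ) ^ n := by
      rw [hE, volume_pi_pi]
      have hic : volume (Icc (-δ) δ) = ENNReal.ofReal (2*δ) := by
        rw [Real.volume_Icc]; congr 1; ring
      simp [hic]
    have hxlow : ∀ x ∈ E, (1:ℝ) ≤ skelMax n k δ f x := by
      intro x hx
      refine one_le_skelMax hkn hδ0 hδ1 fun j => ?_
      have := hx j (Set.mem_univ j)
      exact abs_le.2 ⟨this.1, this.2⟩
    have hlint : volume E ≤ ∫⁻ x, (‖skelMax n k δ f x‖₊ : ENNReal) ^ q := by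
      calc volume E = ∫⁻ x in E, 1 := (setLIntegral_one E).symm
        _ = ∫⁻ x, E.indicator (fun _ => 1) x := (lintegral_indicator hEmeas _).symm
        _ ≤ ∫⁻ x, (‖skelMax n k δ f x‖₊ : ENNReal) ^ q := by
            refine lintegral_mono fun x => ?_
            by_cases hx : x ∈ E
            · rw [Set.indicator_of_mem hx]
              have h1 : (1:ENNReal) ≤ (‖skelMax n k δ f x‖₊ : ENNReal) := by
                rw [show (1:ENNReal) = ((1:NNReal):ENNReal) by norm_num, ENNReal.coe_le_coe,
                  ← NNReal.coe_le_coe]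
                simp only [coe_nnnorm, Real.norm_eq_abs, NNReal.coe_one]
                exact le_trans (hxlow x hx) (le_abs_self _)
              calc (1:ENNReal) = 1 ^ q := (ENNReal.one_rpow q).symm
                _ ≤ _ := ENNReal.rpow_le_rpow h1 qpos.le
            · rw [Set.indicator_of_notMem hx]; exact zero_le
    have hRHS : volume E ^ (1/q) ≤ eLpNorm (skelMax n k δ f) (ENNReal.ofReal q) volume := by
      rw [eLpNorm_eq_lintegral_rpow_enorm_toReal hq0 ENNReal.ofReal_ne_top, hqtr]
      exact ENNReal.rpow_le_rpow hlint (by positivity)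
    refine le_trans ?_ hRHS
    rw [hfnorm, hEvol]
    -- both sides are explicit now
    have hkey : ((2:ℝ)^((n:ℝ)/q) / A^((1:ℝ)/p)) * δ ^ ((n : ℝ) / q - ((n : ℝ) - k) / p) *
        (A * δ^(n-k)) ^ (1/p) = (2*δ) ^ ((n:ℝ)/q) := by
      have hCne : A ^ ((1:ℝ)/p) ≠ 0 := by positivity
      rw [Real.mul_rpow hA.le (pow_nonneg hδ0.le _),
        ← Real.rpow_natCast δ (n-k), ← Real.rpow_mul hδ0.le, Nat.cast_sub hkn,
        Real.mul_rpow (by norm_num : (0:ℝ) ≤ 2) hδ0.le]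
      have hdd : δ ^ ((n : ℝ) / q - ((n : ℝ) - k) / p) * δ ^ (((n:ℝ) - (k:ℝ)) * (1/p)) =
          δ ^ ((n:ℝ)/q) := by
        rw [← Real.rpow_add hδ0]; congr 1; ring
      calc (2:ℝ)^((n:ℝ)/q) / A^((1:ℝ)/p) * δ ^ ((n : ℝ) / q - ((n : ℝ) - k) / p) *
            (A^((1:ℝ)/p) * δ ^ (((n:ℝ) - (k:ℝ)) * (1/p)))
          = (2:ℝ)^((n:ℝ)/q) / A^((1:ℝ)/p) * A^((1:ℝ)/p) *
            (δ ^ ((n : ℝ) / q - ((n : ℝ) - k) / p) * δ ^ (((n:ℝ) - (k:ℝ)) * (1/p))) := by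
            ring
        _ = (2:ℝ)^((n:ℝ)/q) * δ ^ ((n:ℝ)/q) := by rw [div_mul_cancel₀ _ hCne, hdd]
    calc ENNReal.ofReal (((2:ℝ)^((n:ℝ)/q) / A^((1:ℝ)/p)) *
          δ ^ ((n : ℝ) / q - ((n : ℝ) - k) / p)) * volume U ^ (1/p)
        ≤ ENNReal.ofReal (((2:ℝ)^((n:ℝ)/q) / A^((1:ℝ)/p)) *
          δ ^ ((n : ℝ) / q - ((n : ℝ) - k) / p)) * ENNReal.ofReal (A * δ^(n-k)) ^ (1/p) := by
          gcongr
      _ = ENNReal.ofReal (((2:ℝ)^((n:ℝ)/q) / A^((1:ℝ)/p)) *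
          δ ^ ((n : ℝ) / q - ((n : ℝ) - k) / p) * (A * δ^(n-k)) ^ (1/p)) := by
          rw [ENNReal.ofReal_rpow_of_pos (by positivity), ← ENNReal.ofReal_mul (by positivity)]
      _ = ENNReal.ofReal ((2*δ) ^ ((n:ℝ)/q)) := by rw [hkey]
      _ = (ENNReal.ofReal (2*δ)) ^ ((n:ℝ)/q) := (ENNReal.ofReal_rpow_of_pos (by linarith)).symm
      _ = (ENNReal.ofReal (2*δ) ^ n) ^ (1/q) := by
          rw [← ENNReal.rpow_natCast (ENNReal.ofReal (2*δ)) n, ← ENNReal.rpow_mul]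
          congr 1
          ring
end

section
/- Let n ≥ 1 be an integer, τ ∈ ℝ, δ ∈ (0,1), α ≥ 0, β < 1 and H > 0. Let Ω ⊆ ℝ^n be a Borel set, I a nonempty index set, and for each x ∈ Ω let {A_{x,r}}_{r∈I} be a family of Borel subsets of ℝ^n with 0 < |A_{x,r}| < ∞ for all r, with inf_{r∈I} |A_{x,r}| ≥ δ^τ, and with diam({x} ∪ ⋃_{r∈I} A_{x,r}) ≤ C_0 for a constant C_0 independent of x. Define T f(x) = sup_{r∈I} |A_{x,r}|^{−1} ∫_{A_{x,r}} |f(y)| dy. Assume: for every Borel set E ⊆ ℝ^n of finite measure, every λ ∈ (0,1], every maximal δ-separated sequence x_1,…,x_m in the set F = {x ∈ Ω : T 1_E(x) > λ}, and every choice of indices r_1,…,r_m ∈ I with |A_{x_j,r_j} ∩ E| > λ |A_{x_j,r_j}| for each j, the smallest integer μ such that #{ j ∈ {1,…,m} : |{x ∈ A_{x_j,r_j} ∩ E : Σ_{i=1}^m 1_{A_{x_i,r_i} ∩ E}(x) ≤ μ}| ≥ (λ/2)|A_{x_j,r_j}| } ≥ m/2 satisfies μ ≤ H λ^{−α} m^{β}.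 Then, with p = α + 1, q = p/(1−β) and γ = τ/p − n/q, there is a constant C = C(n,q) > 0 such that for every Borel set E ⊆ ℝ^n of finite measure and every λ ∈ (0,1]: |{x ∈ Ω : T 1_E(x) > λ}|^{1/q} ≤ C H^{1/p} δ^{−γ} λ^{−1} |E|^{1/p}. -/
open MeasureTheory Metric Set

noncomputable section

open scoped ENNReal

section Helpers

/-- volume of a sup-metric ball in `Fin n → ℝ`. -/
lemma myVolBall {n : ℕ} (x : Fin n → ℝ) {r : ℝ} (hr : 0 < r) :
    volume (Metric.ball x r) = ENNReal.ofReal ((2 * r) ^ n) := by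
  rw [volume_pi_ball _ hr]
  simp [Real.volume_ball, ← ENNReal.ofReal_pow (by positivity : (0:ℝ) ≤ 2*r)]
  rw [ENNReal.ofReal_pow (by positivity), ENNReal.ofReal_mul (by norm_num)]
  simp

/-- counting a δ-separated finite set inside a ball of radius R around y. -/
lemma mySepCount {n : ℕ} {δ R : ℝ} (hδ : 0 < δ) (hR : 0 ≤ R)
    (s : Finset (Fin n → ℝ))
    (hsep : ∀ x ∈ s, ∀ x' ∈ s, x ≠ x' → δ ≤ dist x x')
    (y : Fin n → ℝ) (hball : ∀ x ∈ s, dist x y ≤ R) :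
    (s.card : ℝ) * δ ^ n ≤ (2 * R + δ) ^ n := by
  have hdisj : (↑s : Set (Fin n → ℝ)).PairwiseDisjoint
      (fun x => Metric.ball x (δ / 2)) := by
    intro a ha b hb hab
    exact Metric.ball_disjoint_ball (by linarith [hsep a ha b hb hab])
  have hsub : (⋃ x ∈ s, Metric.ball x (δ / 2)) ⊆ Metric.ball y (R + δ / 2) := by
    intro z hz
    simp only [Set.mem_iUnion, Metric.mem_ball] at hz ⊢
    obtain ⟨x, hx, hzx⟩ := hz
    calc dist z y ≤ dist z x + dist x y := dist_triangle _ _ _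
      _ < δ / 2 + R := by have := hball x hx; linarith
      _ = R + δ / 2 := by ring
  have hmeas := measure_biUnion_finset (μ := volume) hdisj
    (fun b _ => measurableSet_ball)
  have hle : (volume (⋃ x ∈ s, Metric.ball x (δ / 2)))
      ≤ volume (Metric.ball y (R + δ / 2)) := measure_mono hsub
  rw [hmeas] at hle
  have h2 : ∀ x ∈ s, volume (Metric.ball x (δ / 2)) = ENNReal.ofReal (δ ^ n) := by
    intro x _
    rw [myVolBall x (by linarith)]
    congr 1; ring
  rw [Finset.sum_congr rfl h2, Finset.sum_const, myVolBall y (by linarith)] at hle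
  have : (2 * (R + δ / 2)) = 2 * R + δ := by ring
  rw [this] at hle
  have hle' : ENNReal.ofReal ((s.card : ℝ) * δ ^ n) ≤ ENNReal.ofReal ((2 * R + δ) ^ n) := by
    rw [ENNReal.ofReal_mul (by positivity)]
    simpa [nsmul_eq_mul, ENNReal.ofReal_natCast] using hle
  exact (ENNReal.ofReal_le_ofReal_iff (by positivity)).mp hle'

/-- bounded-overlap summation. -/
lemma myOverlap {X : Type*} [MeasurableSpace X] (ν : Measure X) {ι : Type*} [DecidableEq ι]
    (s : Finset ι) (G : ι → Set X) (hG : ∀ j ∈ s, MeasurableSet (G j)) (c : ℝ≥0∞)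
    [∀ y j, Decidable (y ∈ G j)]
    (hover : ∀ y : X, (((s.filter fun j => y ∈ G j).card : ℝ≥0∞)) ≤ c) :
    ∑ j ∈ s, ν (G j) ≤ c * ν Set.univ := by
  classical
  have h1 : ∑ j ∈ s, ν (G j) = ∫⁻ y, ∑ j ∈ s, (G j).indicator 1 y ∂ν := by
    rw [lintegral_finset_sum s (fun j hj => (measurable_one).indicator (hG j hj))]
    exact (Finset.sum_congr rfl fun j hj => (lintegral_indicator_one (hG j hj)).symm)
  rw [h1]
  calc ∫⁻ y, ∑ j ∈ s, (G j).indicator 1 y ∂ν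
      ≤ ∫⁻ _, c ∂ν := by
        apply lintegral_mono
        intro y
        show ∑ j ∈ s, (G j).indicator 1 y ≤ c
        have : ∑ j ∈ s, (G j).indicator (1 : X → ℝ≥0∞) y
            = ((s.filter fun j => y ∈ G j).card : ℝ≥0∞) := by
          simp only [Set.indicator_apply, Pi.one_apply]
          exact Finset.sum_boole _ _
        rw [this]; exact hover y
    _ = c * ν Set.univ := lintegral_const c

lemma mySel {n : ℕ} {I : Type} [Nonempty I] {A : (Fin n → ℝ) → I → Set (Fin n → ℝ)}
    {E : Set (Fin n → ℝ)} (hE : MeasurableSet E) {x : Fin n → ℝ} {lam : ℝ} (hlam0 : 0 < lam)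
    (hpos : ∀ r, 0 < volume (A x r)) (hfin : ∀ r, volume (A x r) < ⊤)
    (h : lam < absMax A (E.indicator fun _ => (1:ℝ)) x) :
    ∃ r : I, ENNReal.ofReal lam * volume (A x r) < volume (A x r ∩ E) := by
  obtain ⟨r, hr⟩ := exists_lt_of_lt_ciSup h
  refine ⟨r, ?_⟩
  have habs : ∀ y, |E.indicator (fun _ => (1:ℝ)) y| = E.indicator (fun _ => (1:ℝ)) y :=
    fun y => abs_of_nonneg (Set.indicator_nonneg (fun _ _ => zero_le_one) y)
  have havg : (⨍ y in A x r, |E.indicator (fun _ => (1:ℝ)) y|)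
      = (volume (A x r)).toReal⁻¹ * (volume (A x r ∩ E)).toReal := by
    rw [setAverage_eq]
    simp_rw [habs]
    rw [setIntegral_indicator hE, setIntegral_const]
    simp [smul_eq_mul]
    rfl
  rw [havg] at hr
  have htA : 0 < (volume (A x r)).toReal :=
    ENNReal.toReal_pos (hpos r).ne' (hfin r).ne
  have hAE : volume (A x r ∩ E) < ⊤ :=
    lt_of_le_of_lt (measure_mono Set.inter_subset_left) (hfin r)
  have hlt : lam * (volume (A x r)).toReal < (volume (A x r ∩ E)).toReal := by
    rw [inv_mul_eq_div, lt_div_iff₀ htA] at hr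
    linarith [hr]
  calc ENNReal.ofReal lam * volume (A x r)
      = ENNReal.ofReal (lam * (volume (A x r)).toReal) := by
        rw [ENNReal.ofReal_mul hlam0.le, ENNReal.ofReal_toReal (hfin r).ne]
    _ < ENNReal.ofReal ((volume (A x r ∩ E)).toReal) := by
        refine (ENNReal.ofReal_lt_ofReal_iff ?_).mpr hlt
        have : 0 < lam * (volume (A x r)).toReal := by positivity
        linarith
    _ = volume (A x r ∩ E) := ENNReal.ofReal_toReal hAE.ne

lemma myArith (n : ℕ) {δ α β H lam e mR τ : ℝ}
    (hδ0 : 0 < δ) (hH : 0 < H) (hp : 0 < α + 1)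
    (hlam0 : 0 < lam) (he : 0 ≤ e) (hm : 1 ≤ mR)
    (hkey : mR / 2 * (lam / 2 * δ ^ τ) ≤ H * lam ^ (-α) * mR ^ β * e) :
    (mR * (2*δ)^n) ^ ((1-β)/(α+1)) ≤
      2 ^ ((n:ℝ) * (1 - β) / (α+1)) * 4 ^ (1 / (α+1)) * H ^ (1/(α+1)) *
        δ ^ (-(τ/(α+1) - (n:ℝ)*(1-β)/(α+1))) / lam * e ^ (1/(α+1)) := by
  have hm0 : (0:ℝ) < mR := lt_of_lt_of_le one_pos hm
  have hpne : α + 1 ≠ 0 := ne_of_gt hp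
  have ht0 : (0:ℝ) < δ ^ τ := Real.rpow_pos_of_pos hδ0 τ
  have ha0 : (0:ℝ) < lam ^ (-α) := Real.rpow_pos_of_pos hlam0 _
  have hb0 : (0:ℝ) < mR ^ β := Real.rpow_pos_of_pos hm0 _
  have h1 : mR ^ (1-β) ≤ 4*H*lam^(-(α+1))*δ^(-τ)*e := by
    have hA : mR ≤ 4*H*lam^(-α)*(mR^β)*e / (lam * δ^τ) := by
      rw [le_div_iff₀ (by positivity)]
      nlinarith [hkey]
    have e1 : mR ^ (1-β) = mR * mR^(-β) := by
      rw [show (1:ℝ)-β = 1 + (-β) by ring, Real.rpow_add hm0, Real.rpow_one]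
    have e2 : mR ^ β * mR ^ (-β) = 1 := by
      rw [← Real.rpow_add hm0]; simp
    have h2 : mR * mR^(-β) ≤ (4*H*lam^(-α)*(mR^β)*e / (lam * δ^τ)) * mR^(-β) :=
      mul_le_mul_of_nonneg_right hA (by positivity)
    rw [e1]
    refine h2.trans (le_of_eq ?_)
    rw [show (4:ℝ)*H*lam^(-α)*(mR^β)*e / (lam * δ^τ) * mR^(-β)
        = 4*H*lam^(-α)*e / (lam * δ^τ) * (mR^β * mR^(-β)) by ring, e2, mul_one]
    rw [show -(α+1) = -α + (-1) by ring, Real.rpow_add hlam0, Real.rpow_neg_one,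
      Real.rpow_neg hδ0.le]
    field_simp
  have h2 : mR ^ ((1-β)/(α+1)) ≤
      4^(1/(α+1)) * H^(1/(α+1)) * (1/lam) * δ^(-(τ/(α+1))) * e^(1/(α+1)) := by
    have hmono := Real.rpow_le_rpow (by positivity) h1 (by positivity : (0:ℝ) ≤ 1/(α+1))
    calc mR ^ ((1-β)/(α+1)) = (mR ^ (1-β)) ^ (1/(α+1)) := by
          rw [← Real.rpow_mul hm0.le]; congr 1; field_simp
      _ ≤ (4*H*lam^(-(α+1))*δ^(-τ)*e) ^ (1/(α+1)) := hmono
      _ = 4^(1/(α+1)) * H^(1/(α+1)) * (lam^(-(α+1)))^(1/(α+1)) * (δ^(-τ))^(1/(α+1))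
            * e^(1/(α+1)) := by
          rw [Real.mul_rpow (by positivity) he, Real.mul_rpow (by positivity)
            (by positivity), Real.mul_rpow (by positivity) (by positivity),
            Real.mul_rpow (by positivity) (by positivity)]
      _ = 4^(1/(α+1)) * H^(1/(α+1)) * (1/lam) * δ^(-(τ/(α+1))) * e^(1/(α+1)) := by
          rw [← Real.rpow_mul hlam0.le, ← Real.rpow_mul hδ0.le]
          rw [show -(α+1) * (1/(α+1)) = -1 by field_simp,
            show -τ * (1/(α+1)) = -(τ/(α+1)) by field_simp,
            Real.rpow_neg_one]
          ring
  have key3 : ((2*δ:ℝ)^n : ℝ) ^ ((1-β)/(α+1)) = 2 ^ ((n:ℝ)*(1-β)/(α+1)) * δ ^ ((n:ℝ)*(1-β)/(α+1)) := by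
    rw [← Real.rpow_natCast (2*δ) n, ← Real.rpow_mul (by positivity),
      show (n:ℝ) * ((1-β)/(α+1)) = (n:ℝ)*(1-β)/(α+1) by ring,
      Real.mul_rpow (by norm_num) hδ0.le]
  calc (mR * (2*δ)^n) ^ ((1-β)/(α+1))
      = mR ^ ((1-β)/(α+1)) * ((2*δ)^n) ^ ((1-β)/(α+1)) := by
        rw [Real.mul_rpow hm0.le (by positivity)]
    _ ≤ (4^(1/(α+1)) * H^(1/(α+1)) * (1/lam) * δ^(-(τ/(α+1))) * e^(1/(α+1)))
        * ((2*δ)^n) ^ ((1-β)/(α+1)) :=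
        mul_le_mul_of_nonneg_right h2 (by positivity)
    _ = 2 ^ ((n:ℝ) * (1 - β) / (α+1)) * 4 ^ (1 / (α+1)) * H ^ (1/(α+1)) *
        δ ^ (-(τ/(α+1) - (n:ℝ)*(1-β)/(α+1))) / lam * e ^ (1/(α+1)) := by
        rw [key3, show -(τ/(α+1) - (n:ℝ)*(1-β)/(α+1)) = -(τ/(α+1)) + (n:ℝ)*(1-β)/(α+1) by ring,
          Real.rpow_add hδ0]
        ring

lemma myMaxSep {n : ℕ} {δ : ℝ} (hδ0 : 0 < δ) (F : Set (Fin n → ℝ)) (M : ℕ)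
    (hM : ∀ s : Finset (Fin n → ℝ), ↑s ⊆ F →
      (∀ x ∈ s, ∀ x' ∈ s, x ≠ x' → δ ≤ dist x x') → s.card ≤ M) :
    ∃ s : Finset (Fin n → ℝ), ↑s ⊆ F ∧
      (∀ x ∈ s, ∀ x' ∈ s, x ≠ x' → δ ≤ dist x x') ∧
      ∀ y ∈ F, ∃ x ∈ s, dist y x < δ := by
  classical
  set K : Set ℕ := {k | ∃ s : Finset (Fin n → ℝ), (↑s ⊆ F ∧
    (∀ x ∈ s, ∀ x' ∈ s, x ≠ x' → δ ≤ dist x x')) ∧ s.card = k} with hK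
  have hKne : K.Nonempty := ⟨0, ∅, ⟨by simp, by simp⟩, rfl⟩
  have hKbdd : BddAbove K := by
    refine ⟨M, fun k hk => ?_⟩
    obtain ⟨s, ⟨h1, h2⟩, rfl⟩ := hk
    exact hM s h1 h2
  have hmem := Nat.sSup_mem hKne hKbdd
  obtain ⟨s, ⟨hsF, hsep⟩, hcard⟩ := hmem
  refine ⟨s, hsF, hsep, ?_⟩
  intro y hy
  by_contra hc
  push_neg at hc
  have hynot : y ∉ s := fun hys => by
    have := hc y hys; simp at this; exact absurd this (not_le.mpr hδ0)
  have hins : (↑(insert y s) : Set (Fin n → ℝ)) ⊆ F := by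
    intro z hz
    simp only [Finset.coe_insert, Set.mem_insert_iff] at hz
    rcases hz with rfl | hz
    · exact hy
    · exact hsF hz
  have hinssep : ∀ x ∈ insert y s, ∀ x' ∈ insert y s, x ≠ x' → δ ≤ dist x x' := by
    intro x hx x' hx' hne
    simp only [Finset.mem_insert] at hx hx'
    rcases hx with rfl | hx
    · rcases hx' with rfl | hx'
      · exact absurd rfl hne
      · exact hc x' hx'
    · rcases hx' with rfl | hx'
      · rw [dist_comm]; exact hc x hx
      · exact hsep x hx x' hx' hne
  have : s.card + 1 ∈ K := ⟨insert y s, ⟨hins, hinssep⟩, by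
    rw [Finset.card_insert_of_notMem hynot]⟩
  have := le_csSup hKbdd this
  omega

lemma myCardBound {n : ℕ} {δ R : ℝ} (hδ0 : 0 < δ) (hR : 0 ≤ R)
    {E : Set (Fin n → ℝ)}
    {F : Set (Fin n → ℝ)} {b : ℝ≥0∞}
    (hpt : ∀ x ∈ F, b ≤ volume (E ∩ Metric.closedBall x R))
    (s : Finset (Fin n → ℝ)) (hsF : ↑s ⊆ F)
    (hsep : ∀ x ∈ s, ∀ x' ∈ s, x ≠ x' → δ ≤ dist x x') :
    (s.card : ℝ≥0∞) * b ≤ ENNReal.ofReal ((2*R+δ)^n / δ^n) * volume E := by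
  classical
  have hstep : ∀ x ∈ s, b ≤ (volume.restrict E) (Metric.closedBall x R) := by
    intro x hx
    rw [Measure.restrict_apply measurableSet_closedBall, Set.inter_comm]
    exact hpt x (hsF hx)
  calc (s.card : ℝ≥0∞) * b = ∑ _x ∈ s, b := by
        rw [Finset.sum_const, nsmul_eq_mul]
    _ ≤ ∑ x ∈ s, (volume.restrict E) (Metric.closedBall x R) :=
        Finset.sum_le_sum hstep
    _ ≤ ENNReal.ofReal ((2*R+δ)^n / δ^n) * (volume.restrict E) Set.univ := by
        refine myOverlap _ s _ (fun j _ => measurableSet_closedBall) _ ?_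
        intro y
        have hsc := mySepCount hδ0 hR (s.filter fun x => y ∈ Metric.closedBall x R)
          (fun x hx x' hx' hne => hsep x (Finset.mem_filter.mp hx).1
            x' (Finset.mem_filter.mp hx').1 hne) y
          (fun x hx => by
            have := (Finset.mem_filter.mp hx).2
            rw [Metric.mem_closedBall] at this
            rw [dist_comm]; exact this)
        have hcard : ((s.filter fun x => y ∈ Metric.closedBall x R).card : ℝ)
            ≤ (2*R+δ)^n / δ^n := by
          rw [le_div_iff₀ (by positivity)]
          exact hsc
        calc ((s.filter fun x => y ∈ Metric.closedBall x R).card : ℝ≥0∞)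
            = ENNReal.ofReal ((s.filter fun x => y ∈ Metric.closedBall x R).card : ℝ) := by
              rw [ENNReal.ofReal_natCast]
          _ ≤ _ := ENNReal.ofReal_le_ofReal hcard
    _ = ENNReal.ofReal ((2*R+δ)^n / δ^n) * volume E := by
        rw [Measure.restrict_apply_univ]

end Helpers


set_option maxHeartbeats 1000000 in
/-- abstract combinatorial bootstrapping lemma, Lemma 3.1.
Under the stated hypotheses on the family `{A_{x,r}}` (measure bounded below by `δ^τ`,
uniformly bounded diameter) and assuming the multiplicity bound `μ ≤ H λ^{-α} m^β` for
the least admissible `μ` arising from any maximal `δ`-separated family in the superlevel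
set `F = {T 1_E > λ}`, the operator `T` satisfies the restricted weak-type `(p,q)` bound
`|{T 1_E > λ}|^{1/q} ≤ C H^{1/p} δ^{-γ} λ^{-1} |E|^{1/p}` with `p = α+1`, `q = p/(1-β)`,
`γ = τ/p - n/q`. -/
theorem abstract_restricted_weak_type (n : ℕ) (hn : 1 ≤ n) (τ : ℝ)
    (δ : ℝ) (hδ : δ ∈ Set.Ioo (0 : ℝ) 1) (α β H : ℝ)
    (hα : 0 ≤ α) (hβ : β < 1) (hH : 0 < H)
    (Ω : Set (Fin n → ℝ)) (hΩ : MeasurableSet Ω) (I : Type) (hI : Nonempty I)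
    (A : (Fin n → ℝ) → I → Set (Fin n → ℝ))
    (hAmeas : ∀ x r, MeasurableSet (A x r))
    (hApos : ∀ x ∈ Ω, ∀ r, 0 < volume (A x r))
    (hAfin : ∀ x ∈ Ω, ∀ r, volume (A x r) < ⊤)
    (hAlow : ∀ x ∈ Ω, ∀ r, ENNReal.ofReal (δ ^ τ) ≤ volume (A x r))
    (C0 : ℝ)
    (hdiam : ∀ x ∈ Ω, EMetric.diam ({x} ∪ ⋃ r : I, A x r) ≤ ENNReal.ofReal C0)
    (hyp : ∀ E : Set (Fin n → ℝ), MeasurableSet E → volume E < ⊤ →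
      ∀ lam ∈ Set.Ioc (0 : ℝ) 1, ∀ (m : ℕ) (xs : Fin m → Fin n → ℝ),
        (∀ j, xs j ∈ {x ∈ Ω | lam < absMax A (E.indicator fun _ => (1 : ℝ)) x}) →
        (∀ j j', j ≠ j' → δ ≤ dist (xs j) (xs j')) →
        (∀ y ∈ {x ∈ Ω | lam < absMax A (E.indicator fun _ => (1 : ℝ)) x},
          ∃ j, dist y (xs j) < δ) →
        ∀ rs : Fin m → I,
          (∀ j, ENNReal.ofReal lam * volume (A (xs j) (rs j)) <
            volume (A (xs j) (rs j) ∩ E)) →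
        ∀ μ : ℕ, goodCount (fun j => A (xs j) (rs j)) E lam μ →
          (∀ ν : ℕ, ν < μ → ¬ goodCount (fun j => A (xs j) (rs j)) E lam ν) →
          (μ : ℝ) ≤ H * lam ^ (-α) * (m : ℝ) ^ β) :
    ∃ C > 0, ∀ E : Set (Fin n → ℝ), MeasurableSet E → volume E < ⊤ →
      ∀ lam ∈ Set.Ioc (0 : ℝ) 1,
        volume {x ∈ Ω | lam < absMax A (E.indicator fun _ => (1 : ℝ)) x} ^
            ((1 - β) / (α + 1)) ≤
          ENNReal.ofReal (C * H ^ (1 / (α + 1)) *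
              δ ^ (-(τ / (α + 1) - (n : ℝ) * (1 - β) / (α + 1))) / lam) *
            volume E ^ (1 / (α + 1)) := by
  classical
  have hδ0 : 0 < δ := hδ.1
  have hp : 0 < α + 1 := by linarith
  have hs0 : 0 < (1 - β) / (α + 1) := div_pos (by linarith) hp
  refine ⟨2 ^ ((n:ℝ) * (1 - β) / (α + 1)) * 4 ^ (1 / (α + 1)), by positivity, ?_⟩
  intro E hE hEfin lam hlam
  obtain ⟨hlam0, hlam1⟩ := hlam
  set F := {x ∈ Ω | lam < absMax A (E.indicator fun _ => (1 : ℝ)) x} with hFdef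
  have ht0 : (0:ℝ) < δ ^ τ := Real.rpow_pos_of_pos hδ0 τ
  -- selection of a good radius at every point of F
  have hsel : ∀ x ∈ F, ∃ r : I,
      ENNReal.ofReal lam * volume (A x r) < volume (A x r ∩ E) := by
    intro x hx
    exact mySel hE hlam0 (hApos x hx.1) (hAfin x hx.1) hx.2
  -- every point of F carries definite E-mass nearby
  set R : ℝ := max C0 0 with hRdef
  have hR0 : 0 ≤ R := le_max_right _ _
  have hsubB : ∀ x ∈ Ω, ∀ r : I, A x r ⊆ Metric.closedBall x R := by
    intro x hxΩ r a ha
    have h1 : edist a x ≤ ENNReal.ofReal C0 := by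
      refine le_trans ?_ (hdiam x hxΩ)
      exact EMetric.edist_le_diam_of_mem
        (Set.mem_union_right _ (Set.mem_iUnion.mpr ⟨r, ha⟩))
        (Set.mem_union_left _ rfl)
    have h2 : edist a x ≤ ENNReal.ofReal R :=
      le_trans h1 (ENNReal.ofReal_le_ofReal (le_max_left _ _))
    rw [edist_dist] at h2
    exact Metric.mem_closedBall.mpr ((ENNReal.ofReal_le_ofReal_iff hR0).mp h2)
  have hpt : ∀ x ∈ F, ENNReal.ofReal (lam * δ ^ τ)
      ≤ volume (E ∩ Metric.closedBall x R) := by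
    intro x hx
    obtain ⟨r, hr⟩ := hsel x hx
    calc ENNReal.ofReal (lam * δ ^ τ)
        = ENNReal.ofReal lam * ENNReal.ofReal (δ ^ τ) :=
          ENNReal.ofReal_mul hlam0.le
      _ ≤ ENNReal.ofReal lam * volume (A x r) :=
          mul_le_mul_right (hAlow x hx.1 r) _
      _ ≤ volume (A x r ∩ E) := hr.le
      _ ≤ volume (E ∩ Metric.closedBall x R) := by
          refine measure_mono ?_
          intro y hy
          exact ⟨hy.2, hsubB x hx.1 r hy.1⟩
  -- uniform bound on the size of δ-separated subsets of F
  set Mr : ℝ := ((2*R+δ)^n / δ^n) * (volume E).toReal / (lam * δ ^ τ) with hMrdef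
  have hMbound : ∀ s : Finset (Fin n → ℝ), ↑s ⊆ F →
      (∀ x ∈ s, ∀ x' ∈ s, x ≠ x' → δ ≤ dist x x') → s.card ≤ ⌈Mr⌉₊ := by
    intro s hsF hsep
    have h := myCardBound hδ0 hR0 hpt s hsF hsep
    have hfin : ENNReal.ofReal ((2*R+δ)^n / δ^n) * volume E ≠ ⊤ :=
      ENNReal.mul_ne_top ENNReal.ofReal_ne_top hEfin.ne
    have h2 := ENNReal.toReal_mono hfin h
    rw [ENNReal.toReal_mul, ENNReal.toReal_mul, ENNReal.toReal_natCast,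
      ENNReal.toReal_ofReal (by positivity), ENNReal.toReal_ofReal (by positivity)] at h2
    have h3 : (s.card : ℝ) ≤ Mr := by
      rw [hMrdef, div_eq_mul_inv, mul_assoc]
      rw [← le_div_iff₀ (by positivity)] at h2
      calc (s.card : ℝ) ≤ (2*R+δ)^n / δ^n * (volume E).toReal / (lam * δ^τ) := h2
        _ = (2*R+δ)^n / δ^n * ((volume E).toReal * (lam * δ^τ)⁻¹) := by ring
    exact_mod_cast h3.trans (Nat.le_ceil Mr)
  -- a maximal δ-separated finite family in F
  obtain ⟨s₀, hs₀F, hs₀sep, hs₀max⟩ := myMaxSep hδ0 F ⌈Mr⌉₊ hMbound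
  set m : ℕ := s₀.card with hmdef
  set xs : Fin m → (Fin n → ℝ) := fun j => ((s₀.equivFin.symm j : s₀) : Fin n → ℝ)
    with hxsdef
  have hxsmem : ∀ j, xs j ∈ s₀ := fun j => (s₀.equivFin.symm j).2
  have hxsinj : Function.Injective xs := by
    intro j j' hjj'
    have : (s₀.equivFin.symm j : s₀) = (s₀.equivFin.symm j' : s₀) := Subtype.ext hjj'
    exact s₀.equivFin.symm.injective this
  have hxsF : ∀ j, xs j ∈ F := fun j => hs₀F (hxsmem j)
  have hxssep : ∀ j j', j ≠ j' → δ ≤ dist (xs j) (xs j') := by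
    intro j j' hne
    exact hs₀sep _ (hxsmem j) _ (hxsmem j') (fun h => hne (hxsinj h))
  have hxscov : ∀ y ∈ F, ∃ j, dist y (xs j) < δ := by
    intro y hy
    obtain ⟨x, hxs, hxd⟩ := hs₀max y hy
    refine ⟨s₀.equivFin ⟨x, hxs⟩, ?_⟩
    have : xs (s₀.equivFin ⟨x, hxs⟩) = x := by
      rw [hxsdef]; simp
    rw [this]; exact hxd
  -- radii
  have hrsex : ∀ j, ∃ r : I,
      ENNReal.ofReal lam * volume (A (xs j) r) < volume (A (xs j) r ∩ E) :=
    fun j => hsel (xs j) (hxsF j)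
  set rs : Fin m → I := fun j => (hrsex j).choose with hrsdef
  have hrs : ∀ j, ENNReal.ofReal lam * volume (A (xs j) (rs j))
      < volume (A (xs j) (rs j) ∩ E) := fun j => (hrsex j).choose_spec
  -- the multiplicity function is bounded by m, giving an admissible μ
  have hncard_le : ∀ (y : Fin n → ℝ),
      ({i : Fin m | y ∈ A (xs i) (rs i) ∩ E}).ncard ≤ m := by
    intro y
    calc ({i : Fin m | y ∈ A (xs i) (rs i) ∩ E}).ncard
        ≤ (Set.univ : Set (Fin m)).ncard :=
          Set.ncard_le_ncard (Set.subset_univ _) Set.finite_univ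
      _ = m := by rw [Set.ncard_univ]; simp
  have hgcm : goodCount (fun j => A (xs j) (rs j)) E lam m := by
    unfold goodCount
    have hset : {j : Fin m | ENNReal.ofReal (lam / 2) * volume (A (xs j) (rs j)) ≤
        volume {y ∈ A (xs j) (rs j) ∩ E |
          ({i : Fin m | y ∈ A (xs i) (rs i) ∩ E}).ncard ≤ m}} = Set.univ := by
      ext j
      simp only [Set.mem_setOf_eq, Set.mem_univ, iff_true]
      have heq : {y ∈ A (xs j) (rs j) ∩ E |
          ({i : Fin m | y ∈ A (xs i) (rs i) ∩ E}).ncard ≤ m} = A (xs j) (rs j) ∩ E := by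
        ext y
        simp only [Set.mem_setOf_eq, Set.mem_inter_iff]
        exact ⟨fun h => h.1, fun h => ⟨h, hncard_le y⟩⟩
      rw [heq]
      calc ENNReal.ofReal (lam / 2) * volume (A (xs j) (rs j))
          ≤ ENNReal.ofReal lam * volume (A (xs j) (rs j)) :=
            mul_le_mul_left (ENNReal.ofReal_le_ofReal (by linarith)) _
        _ ≤ volume (A (xs j) (rs j) ∩ E) := (hrs j).le
    rw [hset, Set.ncard_univ, Nat.card_eq_fintype_card, Fintype.card_fin]
    have : (0:ℝ) ≤ (m:ℝ) := Nat.cast_nonneg m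
    linarith
  have hgcex : ∃ μ : ℕ, goodCount (fun j => A (xs j) (rs j)) E lam μ := ⟨m, hgcm⟩
  set μ0 : ℕ := Nat.find hgcex with hμ0def
  have hgc : goodCount (fun j => A (xs j) (rs j)) E lam μ0 := Nat.find_spec hgcex
  have hμbound : (μ0 : ℝ) ≤ H * lam ^ (-α) * (m : ℝ) ^ β := by
    refine hyp E hE hEfin lam ⟨hlam0, hlam1⟩ m xs hxsF hxssep
      (fun y hy => hxscov y hy) rs hrs μ0 hgc ?_
    intro ν hν
    exact Nat.find_min hgcex hν
  -- the good sets
  set G : Fin m → Set (Fin n → ℝ) := fun j => {y ∈ A (xs j) (rs j) ∩ E |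
    ({i : Fin m | y ∈ A (xs i) (rs i) ∩ E}).ncard ≤ μ0} with hGdef
  -- multiplicity count as a measurable function
  set cnt : (Fin n → ℝ) → ℕ := fun y =>
    ∑ i : Fin m, if y ∈ A (xs i) (rs i) ∩ E then 1 else 0 with hcntdef
  have hcnt_eq : ∀ y, ({i : Fin m | y ∈ A (xs i) (rs i) ∩ E}).ncard = cnt y := by
    intro y
    rw [hcntdef]
    have h1 : {i : Fin m | y ∈ A (xs i) (rs i) ∩ E}
        = ↑(Finset.univ.filter fun i => y ∈ A (xs i) (rs i) ∩ E) := by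
      ext i; simp
    rw [h1, Set.ncard_coe_finset]
    simp [Finset.sum_boole]
  have hcnt_meas : Measurable cnt := by
    rw [hcntdef]
    refine Finset.measurable_sum _ (fun i _ => ?_)
    have : (fun y => if y ∈ A (xs i) (rs i) ∩ E then (1:ℕ) else 0)
        = (A (xs i) (rs i) ∩ E).indicator (fun _ => 1) := by
      ext y; simp [Set.indicator_apply]
    rw [this]
    exact Measurable.indicator measurable_const ((hAmeas _ _).inter hE)
  have hGmeas : ∀ j, MeasurableSet (G j) := by
    intro j
    have hmemG : ∀ y, y ∈ G j ↔ (y ∈ A (xs j) (rs j) ∩ E ∧ cnt y ≤ μ0) := fun y =>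
      ⟨fun h => ⟨h.1, (hcnt_eq y) ▸ h.2⟩, fun h => ⟨h.1, (hcnt_eq y).symm ▸ h.2⟩⟩
    have : G j = (A (xs j) (rs j) ∩ E) ∩ (cnt ⁻¹' (Set.Iic μ0)) := by
      ext y
      rw [hmemG y]
      simp [Set.mem_preimage]
    rw [this]
    exact (((hAmeas _ _).inter hE)).inter (hcnt_meas measurableSet_Iic)
  have hGE : ∀ j, G j ⊆ E := fun j y hy => hy.1.2
  -- upper bound on the total mass of the good sets
  have hupper : ∑ j : Fin m, volume (G j) ≤ (μ0 : ℝ≥0∞) * volume E := by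
    have h1 : ∀ j, volume (G j) = (volume.restrict E) (G j) := by
      intro j
      rw [Measure.restrict_apply (hGmeas j), Set.inter_eq_self_of_subset_left (hGE j)]
    calc ∑ j : Fin m, volume (G j) = ∑ j : Fin m, (volume.restrict E) (G j) :=
          Finset.sum_congr rfl (fun j _ => h1 j)
      _ ≤ (μ0 : ℝ≥0∞) * (volume.restrict E) Set.univ := by
          refine myOverlap _ _ _ (fun j _ => hGmeas j) _ ?_
          intro y
          refine Nat.cast_le.mpr ?_
          by_cases hne : (Finset.univ.filter fun j => y ∈ G j).Nonempty
          · obtain ⟨j₀, hj₀⟩ := hne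
            have hyG : y ∈ G j₀ := (Finset.mem_filter.mp hj₀).2
            have hTb : ({i : Fin m | y ∈ A (xs i) (rs i) ∩ E}).ncard ≤ μ0 := hyG.2
            have hsub : (Finset.univ.filter fun j => y ∈ G j)
                ⊆ Finset.univ.filter fun i => y ∈ A (xs i) (rs i) ∩ E := by
              intro j hj
              simp only [Finset.mem_filter, Finset.mem_univ, true_and] at hj ⊢
              exact hj.1
            calc (Finset.univ.filter fun j => y ∈ G j).card
                ≤ (Finset.univ.filter fun i => y ∈ A (xs i) (rs i) ∩ E).card :=
                  Finset.card_le_card hsub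
              _ = ({i : Fin m | y ∈ A (xs i) (rs i) ∩ E}).ncard := by
                  rw [show {i : Fin m | y ∈ A (xs i) (rs i) ∩ E}
                    = ↑(Finset.univ.filter fun i => y ∈ A (xs i) (rs i) ∩ E) by ext i; simp,
                    Set.ncard_coe_finset]
              _ ≤ μ0 := hTb
          · rw [Finset.not_nonempty_iff_eq_empty.mp hne]
            simp
      _ = (μ0 : ℝ≥0∞) * volume E := by rw [Measure.restrict_apply_univ]
  -- lower bound on the total mass of the good sets
  set Good : Set (Fin m) := {j : Fin m |
    ENNReal.ofReal (lam / 2) * volume (A (xs j) (rs j)) ≤ volume (G j)} with hGooddef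
  have hGoodcard : (m : ℝ) / 2 ≤ (Good.ncard : ℝ) := hgc
  have hlower : (Good.ncard : ℝ≥0∞) * ENNReal.ofReal (lam / 2 * δ ^ τ)
      ≤ ∑ j : Fin m, volume (G j) := by
    have hfinG : Good.Finite := Set.toFinite _
    rw [Set.ncard_eq_toFinset_card Good hfinG]
    calc ((hfinG.toFinset.card : ℝ≥0∞)) * ENNReal.ofReal (lam / 2 * δ ^ τ)
        = ∑ _j ∈ hfinG.toFinset, ENNReal.ofReal (lam / 2 * δ ^ τ) := by
          rw [Finset.sum_const, nsmul_eq_mul]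
      _ ≤ ∑ j ∈ hfinG.toFinset, volume (G j) := by
          refine Finset.sum_le_sum (fun j hj => ?_)
          have hjG : j ∈ Good := (Set.Finite.mem_toFinset hfinG).mp hj
          calc ENNReal.ofReal (lam / 2 * δ ^ τ)
              = ENNReal.ofReal (lam / 2) * ENNReal.ofReal (δ ^ τ) :=
                ENNReal.ofReal_mul (by positivity)
            _ ≤ ENNReal.ofReal (lam / 2) * volume (A (xs j) (rs j)) :=
                mul_le_mul_right (hAlow _ (hxsF j).1 _) _
            _ ≤ volume (G j) := hjG
      _ ≤ ∑ j : Fin m, volume (G j) :=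
          Finset.sum_le_sum_of_subset (Finset.subset_univ _)
  -- combine into the key real inequality
  set e : ℝ := (volume E).toReal with hedef
  have he0 : 0 ≤ e := ENNReal.toReal_nonneg
  have hkey : (m : ℝ) / 2 * (lam / 2 * δ ^ τ) ≤ H * lam ^ (-α) * (m : ℝ) ^ β * e := by
    have h1 : (Good.ncard : ℝ≥0∞) * ENNReal.ofReal (lam / 2 * δ ^ τ)
        ≤ (μ0 : ℝ≥0∞) * volume E := le_trans hlower hupper
    have hfin : (μ0 : ℝ≥0∞) * volume E ≠ ⊤ :=
      ENNReal.mul_ne_top (ENNReal.natCast_ne_top _) hEfin.ne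
    have h2 := ENNReal.toReal_mono hfin h1
    rw [ENNReal.toReal_mul, ENNReal.toReal_mul, ENNReal.toReal_natCast,
      ENNReal.toReal_natCast, ENNReal.toReal_ofReal (by positivity)] at h2
    have h3 : (m : ℝ) / 2 * (lam / 2 * δ ^ τ) ≤ (μ0 : ℝ) * e := by
      calc (m : ℝ) / 2 * (lam / 2 * δ ^ τ)
          ≤ (Good.ncard : ℝ) * (lam / 2 * δ ^ τ) := by
            refine mul_le_mul_of_nonneg_right hGoodcard (by positivity)
        _ ≤ (μ0 : ℝ) * e := h2
    refine h3.trans ?_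
    exact mul_le_mul_of_nonneg_right hμbound he0
  -- covering bound
  have hcover : volume F ≤ (m : ℝ≥0∞) * ENNReal.ofReal ((2*δ)^n) := by
    have hsub : F ⊆ ⋃ x ∈ s₀, Metric.ball x δ := by
      intro y hy
      obtain ⟨j, hj⟩ := hxscov y hy
      exact Set.mem_biUnion (hxsmem j) (Metric.mem_ball.mpr hj)
    calc volume F ≤ volume (⋃ x ∈ s₀, Metric.ball x δ) := measure_mono hsub
      _ ≤ ∑ x ∈ s₀, volume (Metric.ball x δ) := measure_biUnion_finset_le _ _
      _ = (m : ℝ≥0∞) * ENNReal.ofReal ((2*δ)^n) := by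
          rw [Finset.sum_congr rfl (fun x _ => myVolBall x hδ0), Finset.sum_const,
            nsmul_eq_mul, hmdef]
  -- final assembly
  rcases Nat.eq_zero_or_pos m with hm0 | hm1
  · have hFempty : F = ∅ := by
      rw [Set.eq_empty_iff_forall_notMem]
      intro y hy
      obtain ⟨j, _⟩ := hxscov y hy
      exact absurd (Fin.pos_iff_nonempty.mpr ⟨j⟩) (by omega)
    rw [hFempty]
    simp [ENNReal.zero_rpow_of_pos hs0]
  · -- m ≥ 1
    have hmR1 : (1:ℝ) ≤ (m:ℝ) := by exact_mod_cast hm1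
    have hmain := myArith (δ := δ) (α := α) (β := β) (H := H) (lam := lam)
      (e := e) (mR := (m:ℝ)) (τ := τ) n hδ0 hH hp hlam0 he0 hmR1 hkey
    have hFbound : volume F ≤ ENNReal.ofReal ((m : ℝ) * (2*δ)^n) := by
      rw [ENNReal.ofReal_mul (Nat.cast_nonneg m), ENNReal.ofReal_natCast]
      exact hcover
    have he0' : 0 < e := by
      by_contra hc
      push_neg at hc
      have he00 : e = 0 := le_antisymm hc he0
      rw [he00, mul_zero] at hkey
      have : (0:ℝ) < (m : ℝ) / 2 * (lam / 2 * δ ^ τ) := by positivity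
      linarith
    calc volume F ^ ((1 - β) / (α + 1))
        ≤ (ENNReal.ofReal ((m : ℝ) * (2*δ)^n)) ^ ((1 - β) / (α + 1)) :=
          ENNReal.rpow_le_rpow hFbound hs0.le
      _ = ENNReal.ofReal (((m : ℝ) * (2*δ)^n) ^ ((1 - β) / (α + 1))) :=
          ENNReal.ofReal_rpow_of_pos (by positivity)
      _ ≤ ENNReal.ofReal (2 ^ ((n:ℝ) * (1 - β) / (α+1)) * 4 ^ (1 / (α+1)) * H ^ (1/(α+1)) *
            δ ^ (-(τ/(α+1) - (n:ℝ)*(1-β)/(α+1))) / lam * e ^ (1/(α+1))) :=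
          ENNReal.ofReal_le_ofReal hmain
      _ = ENNReal.ofReal (2 ^ ((n:ℝ) * (1 - β) / (α + 1)) * 4 ^ (1 / (α + 1)) * H ^ (1 / (α + 1)) *
            δ ^ (-(τ / (α + 1) - (n : ℝ) * (1 - β) / (α + 1))) / lam) *
          ENNReal.ofReal (e ^ (1 / (α + 1))) := by
          rw [← ENNReal.ofReal_mul (by positivity)]
      _ = ENNReal.ofReal (2 ^ ((n:ℝ) * (1 - β) / (α + 1)) * 4 ^ (1 / (α + 1)) * H ^ (1 / (α + 1)) *
            δ ^ (-(τ / (α + 1) - (n : ℝ) * (1 - β) / (α + 1))) / lam) *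
          volume E ^ (1 / (α + 1)) := by
          congr 1
          rw [← ENNReal.ofReal_rpow_of_pos he0', hedef, ENNReal.ofReal_toReal hEfin.ne]
end
end

section
/- Let n ≥ 2 and 0 ≤ k < n be integers, q* = 2n²/((n−k)(2n−1)), and 1 < q ≤ q*. Let δ ∈ (0,1) with 1/δ ∈ ℕ, and let M̃^k_{ρ,δ} be a linearized k-skeleton maximal operator built from some ρ : {x_1,…,x_u} → [1,2] ∩ δℤ and a face selection (ℓ^i)_{i=1}^u with the following overlap property for some constant C_0 = C_0(n,k): for every coordinate k-plane π, every subset J ⊆ {1,…,u} such that ℓ^i is parallel to π for all i ∈ J, and every affine translate V of π, #{ i ∈ J : ℓ^i ⊆ V } ≤ C_0 |J|^{1 − (n−k)(2n−1)/(2n²)}. Then there exists C = C(k,n,q) > 0 such that for every f ∈ L¹(ℝ^n) supported in 7Q_0 and every λ > 0: λ · |{x ∈ Q_0 : M̃^k_{ρ,δ} f(x) > λ}|^{1/q} ≤ C · δ^{(k−n)/(2n)} · ‖f‖_{L¹}. -/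
open MeasureTheory Metric Set

noncomputable section

/-- coordinate extraction from cthickening membership -/
lemma abs_le_of_mem_cthickening {n : ℕ} {x : Fin n → ℝ} {r δ : ℝ} (hδ : 0 ≤ δ)
    {S : Finset (Fin n)} {ε : Fin n → Bool} {y : Fin n → ℝ}
    (hy : y ∈ cthickening δ (kFace x r S ε)) {j : Fin n} (hj : j ∈ S) :
    |y j - (x j + (if ε j then r else -r))| ≤ δ := by
  refine le_of_forall_pos_lt_add fun η hη => ?_
  have h1 : EMetric.infEdist y (kFace x r S ε) ≤ ENNReal.ofReal δ := hy
  have h2 : EMetric.infEdist y (kFace x r S ε) < ENNReal.ofReal (δ + η) :=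
    h1.trans_lt (by rw [ENNReal.ofReal_lt_ofReal_iff (by linarith)]; linarith)
  obtain ⟨w, hw, hd⟩ := EMetric.infEdist_lt_iff.mp h2
  rw [edist_dist, ENNReal.ofReal_lt_ofReal_iff (by linarith)] at hd
  have h3 : dist (y j) (w j) ≤ dist y w := dist_le_pi_dist y w j
  have h4 := hw.1 j hj
  rw [Real.dist_eq] at h3
  calc |y j - (x j + (if ε j then r else -r))| = |y j - w j| := by rw [h4]
    _ ≤ dist y w := h3
    _ < δ + η := hd

lemma volume_cthickening_ge {n k : ℕ} (hk : k < n) {x : Fin n → ℝ} {r δ : ℝ}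
    (hδ : 0 < δ) (hr : 1 ≤ r) {S : Finset (Fin n)} (hS : S.card = n - k) (ε : Fin n → Bool) :
    ENNReal.ofReal (2^n * δ^(n-k)) ≤ volume (cthickening δ (kFace x r S ε)) := by
  set c : Fin n → ℝ := fun j => x j + (if ε j then r else -r) with hc
  set B : Set (Fin n → ℝ) :=
    univ.pi fun j => if j ∈ S then Icc (c j - δ) (c j + δ) else Icc (x j - r) (x j + r) with hB
  have hsub : B ⊆ cthickening δ (kFace x r S ε) := by
    intro y hy
    have hy' : ∀ j, y j ∈ if j ∈ S then Icc (c j - δ) (c j + δ) else Icc (x j - r) (x j + r) :=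
      fun j => hy j (mem_univ j)
    refine mem_cthickening_of_dist_le y (fun j => if j ∈ S then c j else y j) δ _ ⟨?_, ?_⟩ ?_
    · intro j hj; simp only [hj, if_pos, hc]
    · intro j hj
      have h5 := hy' j
      rw [if_neg hj] at h5
      simp only [if_neg hj]
      rw [abs_le]; constructor <;> linarith [h5.1, h5.2]
    · rw [dist_pi_le_iff hδ.le]
      intro j
      by_cases hj : j ∈ S
      · have := hy' j; rw [if_pos hj] at this
        simp only [hj, if_pos, Real.dist_eq]
        rw [abs_le]; constructor <;> linarith [this.1, this.2]
      · simp [hj, Real.dist_eq]; linarith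
  refine le_trans ?_ (measure_mono hsub)
  have hBvol : volume B = ∏ j : Fin n,
      volume (if j ∈ S then Icc (c j - δ) (c j + δ) else Icc (x j - r) (x j + r)) :=
    volume_pi_pi _
  have hfac : ∀ j : Fin n, ENNReal.ofReal (if j ∈ S then 2*δ else 2) ≤
      volume (if j ∈ S then Icc (c j - δ) (c j + δ) else Icc (x j - r) (x j + r)) := by
    intro j
    by_cases hj : j ∈ S
    · simp only [hj, if_pos, Real.volume_Icc]
      exact ENNReal.ofReal_le_ofReal (by linarith)
    · simp only [hj, if_neg, if_false, Real.volume_Icc]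
      exact ENNReal.ofReal_le_ofReal (by linarith)
  have hprod : ∏ j : Fin n, ENNReal.ofReal (if j ∈ S then 2*δ else 2) ≤ volume B := by
    rw [hBvol]; exact Finset.prod_le_prod' fun j _ => hfac j
  refine le_trans ?_ hprod
  rw [← Finset.prod_mul_prod_compl S (fun j => ENNReal.ofReal (if j ∈ S then 2*δ else 2))]
  have h1 : ∏ j ∈ S, ENNReal.ofReal (if j ∈ S then 2*δ else 2) = ENNReal.ofReal (2*δ) ^ (n-k) := by
    rw [Finset.prod_congr rfl fun j hj => by rw [if_pos hj], Finset.prod_const, hS]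
  have h2 : ∏ j ∈ Sᶜ, ENNReal.ofReal (if j ∈ S then 2*δ else 2) = ENNReal.ofReal 2 ^ k := by
    rw [Finset.prod_congr rfl fun j hj => by rw [if_neg (Finset.mem_compl.mp hj)],
      Finset.prod_const, Finset.card_compl, Fintype.card_fin, hS]
    congr 1; omega
  rw [h1, h2, ← ENNReal.ofReal_pow (by linarith), ← ENNReal.ofReal_pow (by norm_num),
    ← ENNReal.ofReal_mul (by positivity)]
  refine ENNReal.ofReal_le_ofReal ?_
  have : (2*δ)^(n-k) * 2^k = 2^n * δ^(n-k) := by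
    rw [mul_pow, mul_comm, ← mul_assoc, mul_comm ((2:ℝ)^k), ← pow_add]
    congr 2; omega
  linarith [this.le]

/-- uniform bound on the number of selected faces inside a fixed plane translate,
extracted from the overlap property -/
lemma fiber_bound {n k m : ℕ} (hk : k < n) {δ : ℝ} {ρ : (Fin n → Fin m) → ℝ}
    {S : (Fin n → Fin m) → Finset (Fin n)} {ε : (Fin n → Fin m) → Fin n → Bool} {C0 : ℝ}
    (hC0 : 0 < C0) (hS : ∀ z, (S z).card = n - k) (hov : OverlapProp k δ ρ S ε C0)
    (π : Finset (Fin n)) (hπ : π.card = k) (v : Fin n → ℝ)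
    (Fb : Finset (Fin n → Fin m))
    (hFb : ∀ z ∈ Fb, linFace δ ρ S ε z ⊆ planeTranslate π v) :
    Fb.card ≤ ⌈C0 ^ (2*(n:ℝ)^2/(((n:ℝ)-k)*(2*(n:ℝ)-1)))⌉₊ := by
  set β : ℝ := ((n : ℝ) - k) * (2 * (n : ℝ) - 1) / (2 * (n : ℝ) ^ 2) with hβ
  have hnk : (0:ℝ) < (n:ℝ) - k := by
    have : (k:ℝ) < n := by exact_mod_cast hk
    linarith
  have hn1 : (1:ℝ) ≤ n := by
    have : (1:ℕ) ≤ n := by omega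
    exact_mod_cast this
  have hβ0 : 0 < β := by
    apply div_pos (by nlinarith) (by nlinarith)
  have hinv : 1/β = 2*(n:ℝ)^2/(((n:ℝ)-k)*(2*(n:ℝ)-1)) := by
    rw [hβ, one_div, inv_div]
  have key := hov π hπ (↑Fb) (fun z hz => ⟨v, hFb z hz⟩) v
  have hsep : {z ∈ (↑Fb : Set (Fin n → Fin m)) | linFace δ ρ S ε z ⊆ planeTranslate π v}
      = (↑Fb : Set (Fin n → Fin m)) := by
    apply Set.sep_eq_self_iff_mem_true.mpr
    exact hFb
  rw [hsep, Set.ncard_coe_finset] at key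
  set t : ℕ := Fb.card with ht
  rcases Nat.eq_zero_or_pos t with h0 | h1
  · omega
  have ht0 : (0:ℝ) < t := by exact_mod_cast h1
  have h2 : (t:ℝ) ^ (β:ℝ) ≤ C0 := by
    have hpos : (0:ℝ) < (t:ℝ) ^ (1 - β) := Real.rpow_pos_of_pos ht0 _
    rw [show (β:ℝ) = 1 - (1 - β) by ring, Real.rpow_sub ht0, Real.rpow_one, div_le_iff₀ hpos]
    exact key
  have h3 : (t:ℝ) ≤ C0 ^ (1/β) := by
    have h4 := Real.rpow_le_rpow (Real.rpow_nonneg ht0.le _) h2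
      (le_of_lt (by positivity : (0:ℝ) < 1/β))
    rwa [← Real.rpow_mul ht0.le, mul_one_div, div_self hβ0.ne', Real.rpow_one] at h4
  rw [hinv] at h3
  have := h3.trans (Nat.le_ceil _)
  exact_mod_cast this

open scoped Classical in
/-- pointwise multiplicity bound for the thickened selected faces -/
lemma mult_bound {n k m : ℕ} (hk : k < n) {δ : ℝ} (hδ0 : 0 < δ)
    {ρ : (Fin n → Fin m) → ℝ} {S : (Fin n → Fin m) → Finset (Fin n)}
    {ε : (Fin n → Fin m) → Fin n → Bool} {C0 : ℝ} (hC0 : 0 < C0)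
    (hρ : ∀ z, ρ z ∈ Set.Icc (1:ℝ) 2 ∧ ∃ t : ℤ, ρ z = δ * t)
    (hS : ∀ z, (S z).card = n - k) (hov : OverlapProp k δ ρ S ε C0) (y : Fin n → ℝ) :
    (Finset.univ.filter
        fun z : Fin n → Fin m => y ∈ cthickening δ (linFace δ ρ S ε z)).card ≤
      ⌈C0 ^ (2*(n:ℝ)^2/(((n:ℝ)-k)*(2*(n:ℝ)-1)))⌉₊ * 8^n := by
  classical
  set K0 : ℕ := ⌈C0 ^ (2*(n:ℝ)^2/(((n:ℝ)-k)*(2*(n:ℝ)-1)))⌉₊ with hK0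
  set T : Finset (Fin n → Fin m) :=
    Finset.univ.filter fun z => y ∈ cthickening δ (linFace δ ρ S ε z) with hT
  set φ : (Fin n → Fin m) → Finset (Fin n) × (Fin n → ℝ) := fun z =>
    (S z, fun j => if j ∈ S z then gridCenter δ z j + (if ε z j then ρ z else -ρ z) else 0)
    with hφ
  have hfiber : ∀ b ∈ T.image φ, (T.filter fun a => φ a = b).card ≤ K0 := by
    rintro ⟨S₀, v₀⟩ _
    set Fb := T.filter fun a => φ a = (S₀, v₀) with hFb
    rcases Finset.eq_empty_or_nonempty Fb with he | ⟨z₀, hz₀⟩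
    · simp [he]
    have hz₀' : φ z₀ = (S₀, v₀) := (Finset.mem_filter.mp hz₀).2
    have hS₀ : S z₀ = S₀ := congrArg Prod.fst hz₀'
    have hπcard : S₀ᶜ.card = k := by
      rw [Finset.card_compl, Fintype.card_fin, ← hS₀, hS z₀]; omega
    refine fiber_bound hk hC0 hS hov S₀ᶜ hπcard v₀ Fb ?_
    intro z hz
    have hz' : φ z = (S₀, v₀) := (Finset.mem_filter.mp hz).2
    have hzS : S z = S₀ := congrArg Prod.fst hz'
    have hzv : (fun j => if j ∈ S z then gridCenter δ z j + (if ε z j then ρ z else -ρ z) else 0)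
        = v₀ := congrArg Prod.snd hz'
    intro w hw j hj
    have hjS : j ∈ S z := by
      rw [hzS]; simpa using hj
    have h1 : w j = gridCenter δ z j + (if ε z j then ρ z else -ρ z) := hw.1 j hjS
    have h2 := congrFun hzv j
    rw [if_pos hjS] at h2
    rw [h1, h2]
  have hmain := Finset.card_le_mul_card_image T K0 hfiber
  refine hmain.trans ?_
  have himg : (T.image φ).card ≤ 8^n := by
    set cand : Fin n → Finset ℝ := fun j =>
      {0, δ * ((⌊y j / δ + 1/2⌋ - 2 : ℤ) + 1/2), δ * ((⌊y j / δ + 1/2⌋ - 1 : ℤ) + 1/2),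
        δ * ((⌊y j / δ + 1/2⌋ : ℤ) + 1/2)} with hcand
    have hsub : T.image φ ⊆ Finset.univ ×ˢ Fintype.piFinset cand := by
      intro b hb
      obtain ⟨z, hzT, hzb⟩ := Finset.mem_image.mp hb
      have hyz : y ∈ cthickening δ (linFace δ ρ S ε z) := (Finset.mem_filter.mp hzT).2
      rw [Finset.mem_product]
      constructor
      · exact Finset.mem_univ _
      · rw [← hzb]
        rw [Fintype.mem_piFinset]
        intro j
        by_cases hj : j ∈ S z
        · simp only [hφ, if_pos hj]
          -- the value is δ * (s + 1/2) for an integer s with the right bounds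
          obtain ⟨⟨hρ1, hρ2⟩, t, htρ⟩ := hρ z
          have habs : |y j - (gridCenter δ z j + (if ε z j then ρ z else -ρ z))| ≤ δ :=
            abs_le_of_mem_cthickening (by linarith) hyz hj
          set s : ℤ := (z j : ℤ) + (if ε z j then t else -t) with hs
          have hval : gridCenter δ z j + (if ε z j then ρ z else -ρ z) = δ * ((s:ℝ) + 1/2) := by
            rw [hs, gridCenter]
            push_cast
            by_cases hε : ε z j
            · simp only [hε, if_true, htρ]; push_cast; ring
            · simp only [hε, if_false, htρ]; push_cast; ring
          rw [hval]
          rw [hval] at habs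
          set b0 : ℤ := ⌊y j / δ + 1/2⌋ with hb0
          have hsle : s ≤ b0 := by
            rw [hb0]
            apply Int.le_floor.mpr
            rw [abs_le] at habs
            have := habs.1
            rw [div_add' _ _ _ hδ0.ne', le_div_iff₀ hδ0]
            nlinarith
          have hsge : b0 - 2 ≤ s := by
            have hfl : (⌊y j / δ + 1/2⌋ : ℝ) ≤ y j / δ + 1/2 := Int.floor_le _
            rw [abs_le] at habs
            have h2' := habs.2
            have : y j / δ ≤ (s:ℝ) + 3/2 := by
              rw [div_le_iff₀ hδ0]
              nlinarith
            have : (b0:ℝ) ≤ (s:ℝ) + 2 := by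
              rw [hb0]
              calc (⌊y j / δ + 1/2⌋:ℝ) ≤ y j / δ + 1/2 := hfl
                _ ≤ (s:ℝ) + 2 := by linarith
            have h6 : b0 ≤ s + 2 := by exact_mod_cast this
            omega
          have : s = b0 - 2 ∨ s = b0 - 1 ∨ s = b0 := by omega
          rcases this with h | h | h <;> rw [h, hb0] <;> simp [hcand]
        · simp only [hφ, if_neg hj]
          simp [hcand]
    refine (Finset.card_le_card hsub).trans ?_
    rw [Finset.card_product, Fintype.card_piFinset]
    have hcard4 : ∀ j, (cand j).card ≤ 4 := by
      intro j
      refine (Finset.card_insert_le _ _).trans (Nat.succ_le_succ ?_)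
      refine (Finset.card_insert_le _ _).trans (Nat.succ_le_succ ?_)
      refine (Finset.card_insert_le _ _).trans (Nat.succ_le_succ ?_)
      simp
    have h44 : ∏ j : Fin n, (cand j).card ≤ ∏ _j : Fin n, 4 :=
      Finset.prod_le_prod' fun j _ => hcard4 j
    have : (Finset.univ : Finset (Finset (Fin n))).card = 2^n := by
      rw [Finset.card_univ, Fintype.card_finset, Fintype.card_fin]
    rw [this, show (8:ℕ)^n = 2^n * 4^n by rw [show (8:ℕ) = 2*4 from rfl, mul_pow]]
    refine Nat.mul_le_mul_left _ (h44.trans ?_)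
    rw [Finset.prod_const, Finset.card_univ, Fintype.card_fin]
  calc K0 * (T.image φ).card ≤ K0 * 8^n := Nat.mul_le_mul_left K0 himg

lemma exp_ineq (n k : ℕ) (hn : 2 ≤ n) (hk : k < n) (q : ℝ) (hq1 : 1 < q)
    (hq2 : q ≤ 2 * (n : ℝ) ^ 2 / (((n : ℝ) - k) * (2 * (n : ℝ) - 1))) :
    ((k:ℝ) - n) / (2*n) ≤ (k:ℝ) * (1/q) + ((k:ℝ) - n) * (1 - 1/q) := by
  have hq0 : (0:ℝ) < q := by linarith
  have hnk : (0:ℝ) < (n:ℝ) - k := by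
    have : (k:ℝ) < n := by exact_mod_cast hk
    linarith
  have hn2 : (2:ℝ) ≤ n := by exact_mod_cast hn
  have hD : (0:ℝ) < ((n:ℝ) - k) * (2 * (n : ℝ) - 1) := by nlinarith
  have h2 : q * (((n : ℝ) - k) * (2 * (n : ℝ) - 1)) ≤ 2 * (n:ℝ)^2 :=
    (le_div_iff₀ hD).mp hq2
  have h3 : ((n : ℝ) - k) * (2 * (n : ℝ) - 1) ≤ 2 * (n:ℝ)^2 * (1/q) := by
    rw [mul_one_div, le_div_iff₀ hq0]
    nlinarith
  rw [div_le_iff₀ (by positivity : (0:ℝ) < 2*(n:ℝ))]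
  nlinarith

lemma delta_pow (n k : ℕ) (hn : 2 ≤ n) (hk : k < n) (q : ℝ) (hq1 : 1 < q)
    (hq2 : q ≤ 2 * (n : ℝ) ^ 2 / (((n : ℝ) - k) * (2 * (n : ℝ) - 1)))
    (δ : ℝ) (hδ0 : 0 < δ) (hδ1 : δ < 1) :
    (δ^k / 2^n) ^ (1/q) * ((2^n * δ^(n-k) : ℝ))⁻¹ ^ (1 - 1/q) ≤
      δ ^ (((k:ℝ) - n) / (2*n)) := by
  have hq0 : (0:ℝ) < q := by linarith
  have hu0 : 0 < 1/q := by positivity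
  have hu1 : 0 ≤ 1 - 1/q := by
    have : 1/q < 1 := by rw [div_lt_one hq0]; linarith
    linarith
  have h2n : (1:ℝ) ≤ 2^n := by exact_mod_cast Nat.one_le_two_pow
  have e1 : (δ^k / 2^n : ℝ) ≤ δ ^ ((k:ℝ)) := by
    rw [Real.rpow_natCast]
    exact div_le_self (by positivity) h2n
  have e2 : ((2^n * δ^(n-k) : ℝ))⁻¹ ≤ δ ^ (-(((n:ℝ) - k))) := by
    have hnn : ((n:ℝ) - k) = ((n - k : ℕ) : ℝ) := by
      rw [Nat.cast_sub hk.le]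
    have hrw : δ ^ (-(((n:ℝ) - k))) = ((δ^(n-k) : ℝ))⁻¹ := by
      rw [Real.rpow_neg hδ0.le, hnn, Real.rpow_natCast]
    rw [hrw]
    exact inv_anti₀ (pow_pos hδ0 _) (by nlinarith [pow_pos hδ0 (n-k)])
  calc (δ^k / 2^n) ^ (1/q) * ((2^n * δ^(n-k) : ℝ))⁻¹ ^ (1 - 1/q)
      ≤ (δ ^ ((k:ℝ))) ^ (1/q) * (δ ^ (-(((n:ℝ) - k)))) ^ (1 - 1/q) := by
        apply mul_le_mul
        · exact Real.rpow_le_rpow (by positivity) e1 hu0.le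
        · exact Real.rpow_le_rpow (by positivity) e2 hu1
        · positivity
        · positivity
    _ = δ ^ ((k:ℝ) * (1/q) + (-((n:ℝ) - k)) * (1 - 1/q)) := by
        rw [Real.rpow_add hδ0, Real.rpow_mul hδ0.le, Real.rpow_mul hδ0.le]
    _ ≤ δ ^ (((k:ℝ) - n) / (2*n)) := by
        apply Real.rpow_le_rpow_of_exponent_ge hδ0 hδ1.le
        have := exp_ineq n k hn hk q hq1 hq2
        nlinarith [this]

lemma mem_gridbox {n m : ℕ} (hm : 0 < m) {δ : ℝ} (hδ0 : 0 < δ) (hδm : δ * m = 1)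
    {x : Fin n → ℝ} (hx : x ∈ Q0 n) (j : Fin n) :
    δ * ((zOf δ hm x j : ℕ) : ℝ) ≤ x j ∧ x j < δ * (((zOf δ hm x j : ℕ) : ℝ) + 1) := by
  have hxj := hx j (mem_univ j)
  obtain ⟨h0, h1⟩ := hxj
  have hc0 : 0 ≤ x j / δ := by positivity
  have hcm : x j / δ < m := by
    rw [div_lt_iff₀ hδ0]
    calc x j < 1 := h1
      _ = δ * m := hδm.symm
      _ = m * δ := mul_comm _ _
  have hfl0 : 0 ≤ ⌊x j / δ⌋ := Int.floor_nonneg.mpr hc0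
  have hflm : ⌊x j / δ⌋ < m := Int.floor_lt.mpr (by exact_mod_cast hcm)
  have hval : ((zOf δ hm x j : ℕ) : ℤ) = ⌊x j / δ⌋ := by
    simp only [zOf]
    have htn : (⌊x j / δ⌋).toNat < m := by omega
    rw [Nat.mod_eq_of_lt htn]
    omega
  have hreal : ((zOf δ hm x j : ℕ) : ℝ) = ((⌊x j / δ⌋ : ℤ) : ℝ) := by exact_mod_cast hval
  have hfle : ((⌊x j / δ⌋ : ℤ) : ℝ) ≤ x j / δ := Int.floor_le _
  have hflt : x j / δ < ((⌊x j / δ⌋ : ℤ) : ℝ) + 1 := Int.lt_floor_add_one _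
  constructor
  · rw [hreal]
    calc δ * ((⌊x j / δ⌋ : ℤ) : ℝ) ≤ δ * (x j / δ) := by
          exact mul_le_mul_of_nonneg_left hfle hδ0.le
      _ = x j := by field_simp
  · rw [hreal]
    calc x j = δ * (x j / δ) := by field_simp
      _ < δ * (((⌊x j / δ⌋ : ℤ) : ℝ) + 1) := by
          exact mul_lt_mul_of_pos_left hflt hδ0

/-- weak-type `(1,q)` bound for the linearized operator, `1 < q ≤ q*`.
If the face selection has the overlap property with constant `C₀ = C₀(n,k)`, then there is
`C = C(k,n,q) > 0` such that for every `f ∈ L¹` supported in `7Q₀` and every `λ > 0`,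
`λ |{x ∈ Q₀ : M̃^k_{ρ,δ} f (x) > λ}|^{1/q} ≤ C δ^{(k-n)/(2n)} ‖f‖_{L¹}`. -/
theorem linMax_weak_type_low (n k : ℕ) (hn : 2 ≤ n) (hk : k < n)
    (q : ℝ) (hq1 : 1 < q)
    (hq2 : q ≤ 2 * (n : ℝ) ^ 2 / (((n : ℝ) - k) * (2 * (n : ℝ) - 1)))
    (C0 : ℝ) (hC0 : 0 < C0) :
    ∃ C > 0, ∀ δ ∈ Set.Ioo (0 : ℝ) 1, ∀ (m : ℕ) (hm : 0 < m), δ * m = 1 →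
      ∀ (ρ : (Fin n → Fin m) → ℝ),
        (∀ z, ρ z ∈ Set.Icc (1 : ℝ) 2 ∧ ∃ t : ℤ, ρ z = δ * t) →
      ∀ (S : (Fin n → Fin m) → Finset (Fin n)), (∀ z, (S z).card = n - k) →
      ∀ (ε : (Fin n → Fin m) → Fin n → Bool), OverlapProp k δ ρ S ε C0 →
      ∀ f : (Fin n → ℝ) → ℝ, Integrable f volume → Function.support f ⊆ sevenQ0 n →
      ∀ lam : ℝ, 0 < lam →
        ENNReal.ofReal lam *
            volume {x ∈ Q0 n | lam < linMax δ hm ρ S ε f x} ^ (1 / q) ≤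
          ENNReal.ofReal (C * δ ^ (((k : ℝ) - n) / (2 * n))) * eLpNorm f 1 volume := by
  classical
  set K0 : ℕ := ⌈C0 ^ (2*(n:ℝ)^2/(((n:ℝ)-k)*(2*(n:ℝ)-1)))⌉₊ with hK0
  set M : ℕ := K0 * 8^n with hM
  have hK0pos : 0 < K0 := Nat.ceil_pos.mpr (Real.rpow_pos_of_pos hC0 _)
  have hMpos : 0 < M := Nat.mul_pos hK0pos (by positivity)
  refine ⟨(M:ℝ), by exact_mod_cast hMpos, ?_⟩
  rintro δ ⟨hδ0, hδ1⟩ m hm hδm ρ hρ S hS ε hov f hfint hfsupp lam hlam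
  have hq0 : (0:ℝ) < q := by linarith
  have hu0 : (0:ℝ) < 1/q := by positivity
  have hu1 : (0:ℝ) ≤ 1 - 1/q := by
    have : 1/q < 1 := by rw [div_lt_one hq0]; linarith
    linarith
  set A : (Fin n → Fin m) → Set (Fin n → ℝ) := fun z => cthickening δ (linFace δ ρ S ε z)
    with hA
  set g : (Fin n → ℝ) → ENNReal := fun y2 => (‖f y2‖₊ : ENNReal) with hg
  set F := eLpNorm f 1 volume with hF
  have hgF : ∫⁻ y2, g y2 = F := (eLpNorm_one_eq_lintegral_enorm : F = ∫⁻ y2, ‖f y2‖ₑ).symm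
  set L := ENNReal.ofReal lam with hL
  have hL0 : L ≠ 0 := by simp [hL, ENNReal.ofReal_pos.mpr hlam |>.ne']
  have hLtop : L ≠ ⊤ := ENNReal.ofReal_ne_top
  set badF : Finset (Fin n → Fin m) :=
    Finset.univ.filter (fun z => lam < ⨍ y2 in A z, |f y2|) with hbadF
  set P : ℝ := 2^n * δ^(n-k) with hP
  have hPpos : 0 < P := by positivity
  have hAmeas : ∀ z, MeasurableSet (A z) := fun z => isClosed_cthickening.measurableSet
  have hAfin : ∀ z, volume (A z) < ⊤ := by
    intro z
    apply Bornology.IsBounded.measure_lt_top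
    apply Bornology.IsBounded.cthickening
    have hρ1 : 1 ≤ ρ z := (hρ z).1.1
    have hsub : linFace δ ρ S ε z ⊆ Metric.closedBall (gridCenter δ z) (ρ z) := by
      intro w hw
      rw [Metric.mem_closedBall, dist_pi_le_iff (by linarith)]
      intro j
      by_cases hj : j ∈ S z
      · rw [Real.dist_eq, hw.1 j hj]
        have : gridCenter δ z j + (if ε z j then ρ z else -ρ z) - gridCenter δ z j
            = (if ε z j then ρ z else -ρ z) := by ring
        rw [this]
        split_ifs
        · rw [abs_of_nonneg (by linarith)]
        · rw [abs_of_nonpos (by linarith)]; linarith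
      · rw [Real.dist_eq]; exact hw.2 j hj
    exact Metric.isBounded_closedBall.subset hsub
  have hAvol : ∀ z, ENNReal.ofReal P ≤ volume (A z) := fun z =>
    volume_cthickening_ge hk hδ0 (hρ z).1.1 (hS z) (ε z)
  -- per-bad-cube estimate
  have hbadz : ∀ z ∈ badF, L * ENNReal.ofReal P ≤ ∫⁻ y2 in A z, g y2 := by
    intro z hz
    have hzlam : lam < ⨍ y2 in A z, |f y2| := (Finset.mem_filter.mp hz).2
    have htP : P ≤ (volume (A z)).toReal := by
      calc P = (ENNReal.ofReal P).toReal := (ENNReal.toReal_ofReal hPpos.le).symm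
        _ ≤ (volume (A z)).toReal := ENNReal.toReal_mono (hAfin z).ne (hAvol z)
    have hvpos : 0 < (volume (A z)).toReal := lt_of_lt_of_le hPpos htP
    have hbad' : lam * (volume (A z)).toReal < ∫ y2 in A z, |f y2| := by
      rw [setAverage_eq, smul_eq_mul] at hzlam
      calc lam * (volume (A z)).toReal
          < ((volume (A z)).toReal⁻¹ * ∫ y2 in A z, |f y2|) * (volume (A z)).toReal :=
            mul_lt_mul_of_pos_right hzlam hvpos
        _ = ∫ y2 in A z, |f y2| := by field_simp
    have heq : ENNReal.ofReal (∫ y2 in A z, |f y2|) = ∫⁻ y2 in A z, g y2 := by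
      have := ofReal_integral_norm_eq_lintegral_enorm (hfint.integrableOn (s := A z))
      exact this
    calc L * ENNReal.ofReal P ≤ L * volume (A z) := mul_le_mul_right (hAvol z) L
      _ = ENNReal.ofReal (lam * (volume (A z)).toReal) := by
          rw [ENNReal.ofReal_mul hlam.le, ENNReal.ofReal_toReal (hAfin z).ne]
      _ ≤ ENNReal.ofReal (∫ y2 in A z, |f y2|) := ENNReal.ofReal_le_ofReal hbad'.le
      _ = ∫⁻ y2 in A z, g y2 := heq
  -- multiplicity
  have hmult : ∀ y2 : Fin n → ℝ, (badF.filter fun z => y2 ∈ A z).card ≤ M := by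
    intro y2
    have h1 : (badF.filter fun z => y2 ∈ A z) ⊆
        Finset.univ.filter fun z => y2 ∈ cthickening δ (linFace δ ρ S ε z) := by
      intro z hz
      rw [Finset.mem_filter]
      exact ⟨Finset.mem_univ _, (Finset.mem_filter.mp hz).2⟩
    exact le_trans (Finset.card_le_card h1)
      (mult_bound hk hδ0 hC0 hρ hS hov y2)
  -- summed estimate
  have hsum : (badF.card : ENNReal) * (L * ENNReal.ofReal P) ≤ (M : ENNReal) * F := by
    calc (badF.card : ENNReal) * (L * ENNReal.ofReal P)
        = ∑ _z ∈ badF, (L * ENNReal.ofReal P) := by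
          rw [Finset.sum_const, nsmul_eq_mul]
      _ ≤ ∑ z ∈ badF, ∫⁻ y2 in A z, g y2 := Finset.sum_le_sum hbadz
      _ = ∑ z ∈ badF, ∫⁻ y2, (A z).indicator g y2 := by
          refine Finset.sum_congr rfl fun z _ => ?_
          rw [lintegral_indicator (hAmeas z)]
      _ = ∫⁻ y2, ∑ z ∈ badF, (A z).indicator g y2 :=
          (lintegral_finset_sum' badF fun z _ =>
            (hfint.aemeasurable.enorm.indicator (hAmeas z))).symm
      _ ≤ ∫⁻ y2, (M:ENNReal) * g y2 := by
          refine lintegral_mono fun y2 => ?_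
          have e1 : ∑ z ∈ badF, (A z).indicator g y2
              = ∑ z ∈ badF, if y2 ∈ A z then g y2 else 0 := by
            refine Finset.sum_congr rfl fun z _ => ?_
            rw [Set.indicator_apply]
          rw [e1, ← Finset.sum_filter, Finset.sum_const, nsmul_eq_mul]
          exact mul_le_mul_left (Nat.cast_le.mpr (hmult y2)) _
      _ = (M:ENNReal) * F := by
          rw [lintegral_const_mul' _ _ (by simp), hgF]
  -- measure of the level set
  set volG := volume {x ∈ Q0 n | lam < linMax δ hm ρ S ε f x} with hvolG
  have hvolset : volG ≤ (badF.card : ENNReal) * ENNReal.ofReal (δ^n) := by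
    have hsub : {x ∈ Q0 n | lam < linMax δ hm ρ S ε f x} ⊆
        ⋃ z ∈ badF, (univ.pi fun j => Ico (δ * ((z j : ℕ):ℝ)) (δ * (((z j : ℕ):ℝ)+1))) := by
      rintro x ⟨hxQ, hxlam⟩
      have hzbad : zOf δ hm x ∈ badF := by
        rw [hbadF, Finset.mem_filter]
        exact ⟨Finset.mem_univ _, hxlam⟩
      refine Set.mem_biUnion hzbad ?_
      intro j _
      exact ⟨(mem_gridbox hm hδ0 hδm hxQ j).1, (mem_gridbox hm hδ0 hδm hxQ j).2⟩
    calc volG ≤ volume (⋃ z ∈ badF,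
          (univ.pi fun j => Ico (δ * ((z j : ℕ):ℝ)) (δ * (((z j : ℕ):ℝ)+1)))) :=
        measure_mono hsub
      _ ≤ ∑ z ∈ badF, volume
          (univ.pi fun j => Ico (δ * ((z j : ℕ):ℝ)) (δ * (((z j : ℕ):ℝ)+1))) :=
        measure_biUnion_finset_le _ _
      _ = ∑ _z ∈ badF, ENNReal.ofReal (δ^n) := by
          refine Finset.sum_congr rfl fun z _ => ?_
          rw [volume_pi_pi]
          have : ∀ j : Fin n, volume (Ico (δ * ((z j : ℕ):ℝ)) (δ * (((z j : ℕ):ℝ)+1)))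
              = ENNReal.ofReal δ := by
            intro j
            rw [Real.volume_Ico]
            congr 1
            ring
          rw [Finset.prod_congr rfl fun j _ => this j, Finset.prod_const,
            Finset.card_univ, Fintype.card_fin, ← ENNReal.ofReal_pow hδ0.le]
      _ = (badF.card : ENNReal) * ENNReal.ofReal (δ^n) := by
          rw [Finset.sum_const, nsmul_eq_mul]
  -- final assembly
  rcases eq_or_ne volG 0 with h0 | h0
  · rw [h0, ENNReal.zero_rpow_of_pos hu0, mul_zero]
    exact zero_le
  obtain ⟨x0, hx0Q, hx0lam⟩ := nonempty_of_measure_ne_zero h0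
  have hzbad0 : zOf δ hm x0 ∈ badF := by
    rw [hbadF, Finset.mem_filter]
    exact ⟨Finset.mem_univ _, hx0lam⟩
  have hN1 : 1 ≤ badF.card := Finset.card_pos.mpr ⟨_, hzbad0⟩
  have hLP : L * ENNReal.ofReal P ≤ (M:ENNReal) * F := by
    calc L * ENNReal.ofReal P = 1 * (L * ENNReal.ofReal P) := (one_mul _).symm
      _ ≤ (badF.card : ENNReal) * (L * ENNReal.ofReal P) :=
          mul_le_mul_left (by exact_mod_cast Nat.one_le_cast.mpr hN1) _
      _ ≤ (M:ENNReal) * F := hsum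
  have hoP0 : ENNReal.ofReal P ≠ 0 := (ENNReal.ofReal_pos.mpr hPpos).ne'
  have hF0 : F ≠ 0 := by
    intro hF0'
    rw [hF0', mul_zero] at hLP
    have hpos : 0 < L * ENNReal.ofReal P :=
      ENNReal.mul_pos hL0 hoP0
    exact absurd (le_antisymm hLP zero_le) hpos.ne'
  have hFtop : F ≠ ⊤ := ((memLp_one_iff_integrable.mpr hfint).eLpNorm_lt_top).ne
  have hMF0 : (M:ENNReal) * F ≠ 0 := by
    simp [hF0, hMpos.ne']
  have hMFtop : (M:ENNReal) * F ≠ ⊤ := by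
    exact ENNReal.mul_ne_top (by simp) hFtop
  have hLbound : L ≤ (M:ENNReal) * F * (ENNReal.ofReal P)⁻¹ := by
    have h2 := mul_le_mul_left hLP (ENNReal.ofReal P)⁻¹
    rwa [mul_assoc, ENNReal.mul_inv_cancel hoP0 ENNReal.ofReal_ne_top, mul_one] at h2
  have hLV : L * volG ≤ (M:ENNReal) * F * ENNReal.ofReal (δ^k / 2^n) := by
    have hδn : ENNReal.ofReal (δ^n) = ENNReal.ofReal P * ENNReal.ofReal (δ^k / 2^n) := by
      rw [← ENNReal.ofReal_mul hPpos.le]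
      congr 1
      have hpows : δ^(n-k) * δ^k = δ^n := by
        rw [← pow_add]; congr 1; omega
      rw [hP, ← hpows]
      field_simp
    calc L * volG ≤ L * ((badF.card : ENNReal) * ENNReal.ofReal (δ^n)) :=
          mul_le_mul_right hvolset L
      _ = ((badF.card:ENNReal) * (L * ENNReal.ofReal P)) * ENNReal.ofReal (δ^k / 2^n) := by
          rw [hδn]; ring
      _ ≤ ((M:ENNReal) * F) * ENNReal.ofReal (δ^k / 2^n) := mul_le_mul_left hsum _
  have hsplit : L ^ (1/q) * L ^ (1 - 1/q) = L := by
    rw [← ENNReal.rpow_add _ _ hL0 hLtop]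
    norm_num
  have hMFsplit : ((M:ENNReal) * F) ^ (1/q) * ((M:ENNReal) * F) ^ (1 - 1/q) = (M:ENNReal) * F := by
    rw [← ENNReal.rpow_add _ _ hMF0 hMFtop]
    norm_num
  calc L * volG ^ (1/q)
      = (L ^ (1/q) * L ^ (1 - 1/q)) * volG ^ (1/q) := by rw [hsplit]
    _ = (L ^ (1/q) * volG ^ (1/q)) * L ^ (1 - 1/q) := by ring
    _ = (L * volG) ^ (1/q) * L ^ (1 - 1/q) := by
        rw [ENNReal.mul_rpow_of_nonneg _ _ hu0.le]
    _ ≤ ((M:ENNReal) * F * ENNReal.ofReal (δ^k / 2^n)) ^ (1/q) *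
          ((M:ENNReal) * F * (ENNReal.ofReal P)⁻¹) ^ (1 - 1/q) :=
        mul_le_mul' (ENNReal.rpow_le_rpow hLV hu0.le) (ENNReal.rpow_le_rpow hLbound hu1)
    _ = (((M:ENNReal) * F) ^ (1/q) * ((M:ENNReal) * F) ^ (1 - 1/q)) *
          ((ENNReal.ofReal (δ^k / 2^n)) ^ (1/q) * ((ENNReal.ofReal P)⁻¹) ^ (1 - 1/q)) := by
        rw [ENNReal.mul_rpow_of_nonneg _ _ hu0.le, ENNReal.mul_rpow_of_nonneg _ _ hu1]
        ring
    _ = ((M:ENNReal) * F) * ENNReal.ofReal ((δ^k / 2^n) ^ (1/q) * (P⁻¹) ^ (1 - 1/q)) := by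
        rw [hMFsplit, ← ENNReal.ofReal_inv_of_pos hPpos,
          ENNReal.ofReal_rpow_of_pos (by positivity),
          ENNReal.ofReal_rpow_of_pos (by positivity),
          ← ENNReal.ofReal_mul (by positivity)]
    _ ≤ ((M:ENNReal) * F) * ENNReal.ofReal (δ ^ (((k:ℝ) - n) / (2*n))) := by
        refine mul_le_mul_right (ENNReal.ofReal_le_ofReal ?_) _
        exact delta_pow n k hn hk q hq1 hq2 δ hδ0 hδ1
    _ = ENNReal.ofReal ((M:ℝ) * δ ^ (((k:ℝ) - n) / (2*n))) * F := by
        rw [ENNReal.ofReal_mul (by positivity), ENNReal.ofReal_natCast]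
        ring
end
end
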